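/- arXiv:2508.03667 — 3 statements merged into one kernel-verified Lean document; each statement's English description precedes it below -/
import Mathlib

section
/- Let R be a Γ-graded ring and M a Γ-graded right R-module. Then there exist a gr-injective Γ-graded right R-module E and an injective gr-homomorphism from M into E (equivalently, M is a graded submodule of a gr-injective module). -/
open CategoryTheory

universe u

instance addSubgroupNormalOfComm {M : Type*} [AddCommGroup M] (N : AddSubgroup M) :
    N.Normal := ⟨fun n hn g => by simpa [add_comm] using hn⟩

variable {Γ : Type u} [Groupoid.{u} Γ]

/-- The morphisms of the groupoid `Γ`, bundled together with their endpoints.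
For `γ : GrIdx Γ`, the morphism `γ.2.2 : γ.1 ⟶ γ.2.1` has domain `d(γ) = γ.1`
and range `r(γ) = γ.2.1`. -/
abbrev GrIdx (Γ : Type u) [Groupoid.{u} Γ] : Type u := Σ e f : Γ, e ⟶ f

/-- The data of a `Γ`-grading, a multiplication, and local units `1_e` on an
additive group `R`. -/
structure GRingData (Γ : Type u) [Groupoid.{u} Γ] (R : Type u) [AddCommGroup R] :
    Type u where
  mul : R → R → R
  component : ∀ {e f : Γ}, (e ⟶ f) → AddSubgroup R
  one : Γ → R

/-- The data of a right scalar multiplication by `R` and a `Γ`-grading on an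
additive group `M`. -/
structure GModData (Γ : Type u) [Groupoid.{u} Γ] (R : Type u) (M : Type u)
    [AddCommGroup M] : Type u where
  smul : M → R → M
  component : ∀ {e f : Γ}, (e ⟶ f) → AddSubgroup M

namespace GRingData

variable {R : Type u} [AddCommGroup R]

/-- `𝒜` makes `R` an (object unital) `Γ`-graded ring: `R` is an associative ring,
`R = ⊕_γ R_γ`, `R_γ R_δ ⊆ R_{γδ}` when `γδ` is defined and `R_γ R_δ = 0` otherwise,
each `R_e` (`e ∈ Γ₀`) is unital with identity `1_e`, and
`1_{r(γ)} a = a 1_{d(γ)} = a` for all `a ∈ R_γ`. -/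
structure IsObjectUnital (𝒜 : GRingData Γ R) : Prop where
  mul_assoc : ∀ a b c : R, 𝒜.mul (𝒜.mul a b) c = 𝒜.mul a (𝒜.mul b c)
  left_distrib : ∀ a b c : R, 𝒜.mul a (b + c) = 𝒜.mul a b + 𝒜.mul a c
  right_distrib : ∀ a b c : R, 𝒜.mul (a + b) c = 𝒜.mul a c + 𝒜.mul b c
  decompose : ∀ x : R, ∃ (s : Finset (GrIdx Γ)) (cf : GrIdx Γ → R),
      (∀ γ ∈ s, cf γ ∈ 𝒜.component γ.2.2) ∧ x = ∑ γ ∈ s, cf γ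
  independent : ∀ (s : Finset (GrIdx Γ)) (cf : GrIdx Γ → R),
      (∀ γ ∈ s, cf γ ∈ 𝒜.component γ.2.2) → ∑ γ ∈ s, cf γ = 0 → ∀ γ ∈ s, cf γ = 0
  mul_mem : ∀ {e f g : Γ} (γ : e ⟶ f) (δ : g ⟶ e) {a b : R},
      a ∈ 𝒜.component γ → b ∈ 𝒜.component δ → 𝒜.mul a b ∈ 𝒜.component (δ ≫ γ)
  mul_eq_zero : ∀ {e f g h : Γ} (γ : e ⟶ f) (δ : g ⟶ h) {a b : R},
      h ≠ e → a ∈ 𝒜.component γ → b ∈ 𝒜.component δ → 𝒜.mul a b = 0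
  one_mem : ∀ e : Γ, 𝒜.one e ∈ 𝒜.component (𝟙 e)
  one_mul : ∀ {e f : Γ} (γ : e ⟶ f) {a : R}, a ∈ 𝒜.component γ → 𝒜.mul (𝒜.one f) a = a
  mul_one : ∀ {e f : Γ} (γ : e ⟶ f) {a : R}, a ∈ 𝒜.component γ → 𝒜.mul a (𝒜.one e) = a

/-- `R` regarded as a (`Γ`-graded) right module over itself. -/
def toMod (𝒜 : GRingData Γ R) : GModData Γ R R where
  smul := 𝒜.mul
  component := fun γ => 𝒜.component γ

end GRingData

namespace GModData

variable {R : Type u} {M : Type u} {M' : Type u} [AddCommGroup M] [AddCommGroup M']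

/-- `ℳ` makes `M` a unital `Γ`-graded right module over the `Γ`-graded ring `𝒜`:
`M` is a right `R`-module, `M = ⊕_γ M_γ`, `M_σ R_τ ⊆ M_{στ}` when `στ` is defined
and `M_σ R_τ = 0` otherwise, and `m 1_{d(σ)} = m` for all `m ∈ M_σ`. -/
structure IsGraded [AddCommGroup R] (𝒜 : GRingData Γ R) (ℳ : GModData Γ R M) :
    Prop where
  add_smul : ∀ (m n : M) (a : R), ℳ.smul (m + n) a = ℳ.smul m a + ℳ.smul n a
  smul_add : ∀ (m : M) (a b : R), ℳ.smul m (a + b) = ℳ.smul m a + ℳ.smul m b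
  smul_mul : ∀ (m : M) (a b : R), ℳ.smul m (𝒜.mul a b) = ℳ.smul (ℳ.smul m a) b
  decompose : ∀ x : M, ∃ (s : Finset (GrIdx Γ)) (cf : GrIdx Γ → M),
      (∀ γ ∈ s, cf γ ∈ ℳ.component γ.2.2) ∧ x = ∑ γ ∈ s, cf γ
  independent : ∀ (s : Finset (GrIdx Γ)) (cf : GrIdx Γ → M),
      (∀ γ ∈ s, cf γ ∈ ℳ.component γ.2.2) → ∑ γ ∈ s, cf γ = 0 → ∀ γ ∈ s, cf γ = 0
  smul_mem : ∀ {e f g : Γ} (σ : e ⟶ f) (τ : g ⟶ e) {m : M} {a : R},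
      m ∈ ℳ.component σ → a ∈ 𝒜.component τ → ℳ.smul m a ∈ ℳ.component (τ ≫ σ)
  smul_eq_zero : ∀ {e f g h : Γ} (σ : e ⟶ f) (τ : g ⟶ h) {m : M} {a : R},
      h ≠ e → m ∈ ℳ.component σ → a ∈ 𝒜.component τ → ℳ.smul m a = 0
  smul_one : ∀ {e f : Γ} (σ : e ⟶ f) {m : M}, m ∈ ℳ.component σ →
      ℳ.smul m (𝒜.one e) = m

/-- An element of `M` is homogeneous if it belongs to some homogeneous component. -/
def IsHomogeneous (ℳ : GModData Γ R M) (m : M) : Prop :=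
  ∃ (e f : Γ) (γ : e ⟶ f), m ∈ ℳ.component γ

/-- `N` is a graded submodule of `M`: a submodule (subgroup closed under the right
`R`-action) generated by its homogeneous elements, i.e. `N = ⊕_γ (N ∩ M_γ)`. -/
def IsGrSub (ℳ : GModData Γ R M) (N : AddSubgroup M) : Prop :=
  (∀ m ∈ N, ∀ a : R, ℳ.smul m a ∈ N) ∧
  ∀ n ∈ N, n ∈ AddSubgroup.closure {x : M | x ∈ N ∧ ℳ.IsHomogeneous x}

/-- `M` is gr-noetherian: there is no strictly increasing infinite chain of graded
submodules. -/
def GrNoetherian (ℳ : GModData Γ R M) : Prop :=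
  ¬ ∃ c : ℕ → AddSubgroup M, (∀ n, ℳ.IsGrSub (c n)) ∧ ∀ n, c n < c (n + 1)

/-- `M` is gr-artinian: there is no strictly decreasing infinite chain of graded
submodules. -/
def GrArtinian (ℳ : GModData Γ R M) : Prop :=
  ¬ ∃ c : ℕ → AddSubgroup M, (∀ n, ℳ.IsGrSub (c n)) ∧ ∀ n, c (n + 1) < c n

/-- The `R`-submodule of `M` generated by a set `X`. -/
def rClosure (ℳ : GModData Γ R M) (X : Set M) : AddSubgroup M :=
  sInf {N : AddSubgroup M | X ⊆ N ∧ ∀ m ∈ N, ∀ a : R, ℳ.smul m a ∈ N}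

/-- `M` is finitely generated (as a right `R`-module). -/
def FG (ℳ : GModData Γ R M) : Prop := ∃ s : Finset M, ℳ.rClosure ↑s = ⊤

/-- The submodule `N` of `M` is finitely generated. -/
def FGSub (ℳ : GModData Γ R M) (N : AddSubgroup M) : Prop :=
  ∃ s : Finset M, ↑s ⊆ (N : Set M) ∧ ℳ.rClosure ↑s = N

/-- `M` is finitely gr-cogenerated: every family of graded submodules with zero
intersection has a finite subfamily with zero intersection. -/
def FinGrCogenerated (ℳ : GModData Γ R M) : Prop :=
  ∀ S : Set (AddSubgroup M), (∀ N ∈ S, ℳ.IsGrSub N) → sInf S = ⊥ →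
    ∃ t : Finset (AddSubgroup M), ↑t ⊆ S ∧ t.inf id = ⊥

/-- The quotient module `M/N`, with grading `(M/N)_γ = (M_γ + N)/N`. -/
noncomputable def quot (ℳ : GModData Γ R M) (N : AddSubgroup M) :
    GModData Γ R (M ⧸ N) where
  smul x a := QuotientAddGroup.mk (ℳ.smul (Quotient.out x) a)
  component := fun γ => (ℳ.component γ).map (QuotientAddGroup.mk' N)

open scoped Classical in
/-- The submodule `N`, regarded as a `Γ`-graded right `R`-module. -/
noncomputable def restrict (ℳ : GModData Γ R M) (N : AddSubgroup M) :
    GModData Γ R ↥N where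
  smul m a := if h : ℳ.smul (↑m) a ∈ N then ⟨ℳ.smul (↑m) a, h⟩ else 0
  component := fun γ => (ℳ.component γ).addSubgroupOf N

/-- The subquotient module `P/N` (for `N ≤ P` graded submodules of `M`). -/
noncomputable def subquot (ℳ : GModData Γ R M) (N P : AddSubgroup M) :
    GModData Γ R (↥P ⧸ N.addSubgroupOf P) :=
  (ℳ.restrict P).quot (N.addSubgroupOf P)

/-- `M(e) = ⊕_{r(γ) = e} M_γ`, for `e ∈ Γ₀`. -/
def part (ℳ : GModData Γ R M) (e : Γ) : AddSubgroup M :=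
  ⨆ (f : Γ) (γ : f ⟶ e), ℳ.component γ

/-- `Γ'₀(M) = {e ∈ Γ₀ : M(e) ≠ 0}`. -/
def partSupport (ℳ : GModData Γ R M) : Set Γ := {e : Γ | ℳ.part e ≠ ⊥}

/-- `M` is `Γ₀`-noetherian: `M(e)` is gr-noetherian for every `e ∈ Γ₀`. -/
def G0Noetherian (ℳ : GModData Γ R M) : Prop :=
  ∀ e : Γ, (ℳ.restrict (ℳ.part e)).GrNoetherian

/-- `M` is `Γ₀`-artinian: `M(e)` is gr-artinian for every `e ∈ Γ₀`. -/
def G0Artinian (ℳ : GModData Γ R M) : Prop :=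
  ∀ e : Γ, (ℳ.restrict (ℳ.part e)).GrArtinian

/-- `M` is gr-simple: `M ≠ 0` and its only graded submodules are `0` and `M`. -/
def IsGrSimple (ℳ : GModData Γ R M) : Prop :=
  (⊤ : AddSubgroup M) ≠ ⊥ ∧ ∀ N : AddSubgroup M, ℳ.IsGrSub N → N = ⊥ ∨ N = ⊤

/-- `N` is a gr-simple graded submodule of `M`. -/
def IsGrSimpleSub (ℳ : GModData Γ R M) (N : AddSubgroup M) : Prop :=
  ℳ.IsGrSub N ∧ N ≠ ⊥ ∧
    ∀ L : AddSubgroup M, ℳ.IsGrSub L → L ≤ N → L = ⊥ ∨ L = N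

/-- `N` is a gr-maximal graded submodule of `M`. -/
def IsGrMaximalSub (ℳ : GModData Γ R M) (N : AddSubgroup M) : Prop :=
  ℳ.IsGrSub N ∧ N ≠ ⊤ ∧
    ∀ L : AddSubgroup M, ℳ.IsGrSub L → N ≤ L → L = N ∨ L = ⊤

/-- The graded Jacobson radical of `M`: the intersection of all gr-maximal graded
submodules of `M` (equal to `M` when there are none). -/
def grRad (ℳ : GModData Γ R M) : AddSubgroup M := sInf {N | ℳ.IsGrMaximalSub N}

/-- The gr-socle of `M`: the sum of all gr-simple graded submodules of `M`
(equal to `0` when there are none). -/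
def grSoc (ℳ : GModData Γ R M) : AddSubgroup M := sSup {N | ℳ.IsGrSimpleSub N}

/-- `N` is gr-superfluous in `M`. -/
def GrSuperfluous (ℳ : GModData Γ R M) (N : AddSubgroup M) : Prop :=
  ∀ X : AddSubgroup M, ℳ.IsGrSub X → N ⊔ X = ⊤ → X = ⊤

/-- `N` is gr-essential in `M`. -/
def GrEssential (ℳ : GModData Γ R M) (N : AddSubgroup M) : Prop :=
  ∀ X : AddSubgroup M, ℳ.IsGrSub X → N ⊓ X = ⊥ → X = ⊥

/-- `M` is gr-semisimple: the sum of all gr-simple graded submodules is `M`. -/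
def GrSemisimple (ℳ : GModData Γ R M) : Prop :=
  sSup {N : AddSubgroup M | ℳ.IsGrSimpleSub N} = ⊤

/-- `c 0 = 0 ⊆ c 1 ⊆ ⋯ ⊆ c n = M` is a gr-composition series of `M` of length `n`. -/
def IsGrCompSeries (ℳ : GModData Γ R M) (n : ℕ) (c : ℕ → AddSubgroup M) : Prop :=
  c 0 = ⊥ ∧ c n = ⊤ ∧ (∀ i, i ≤ n → ℳ.IsGrSub (c i)) ∧
  (∀ i, i < n → c i ≤ c (i + 1)) ∧
  ∀ i, i < n → (ℳ.subquot (c i) (c (i + 1))).IsGrSimple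

/-- `M` has finite gr-length: it admits a gr-composition series. -/
def FiniteGrLength (ℳ : GModData Γ R M) : Prop := ∃ n c, ℳ.IsGrCompSeries n c

/-- `g : M → M'` is a gr-homomorphism of graded right `R`-modules. -/
def IsGrHom (ℳ : GModData Γ R M) (𝒩 : GModData Γ R M') (g : M → M') : Prop :=
  (∀ m n : M, g (m + n) = g m + g n) ∧
  (∀ (m : M) (a : R), g (ℳ.smul m a) = 𝒩.smul (g m) a) ∧
  ∀ (e f : Γ) (σ : e ⟶ f), ∀ m ∈ ℳ.component σ, g m ∈ 𝒩.component σ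

/-- `M` and `M'` are gr-isomorphic (there is a bijective gr-homomorphism). -/
def GrIso (ℳ : GModData Γ R M) (𝒩 : GModData Γ R M') : Prop :=
  ∃ g : M → M', IsGrHom ℳ 𝒩 g ∧ Function.Bijective g

/-- `g : M → M'` is a homomorphism of degree `γ` (where `γ : e ⟶ f`, i.e.
`d(γ) = e`): `g(M_σ) ⊆ M'_{γσ}` when `γσ` is defined and `g(M_σ) = 0` otherwise. -/
def IsHomOfDeg (ℳ : GModData Γ R M) (𝒩 : GModData Γ R M') {e f : Γ} (γ : e ⟶ f)
    (g : M → M') : Prop :=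
  (∀ m n : M, g (m + n) = g m + g n) ∧
  (∀ (m : M) (a : R), g (ℳ.smul m a) = 𝒩.smul (g m) a) ∧
  (∀ (a : Γ) (σ : a ⟶ e), ∀ m ∈ ℳ.component σ, g m ∈ 𝒩.component (σ ≫ γ)) ∧
  (∀ (a b : Γ) (σ : a ⟶ b), b ≠ e → ∀ m ∈ ℳ.component σ, g m = 0)

/-- `MJ`: the submodule of `M` consisting of finite sums of elements `m a`,
`m ∈ M`, `a ∈ J`. -/
def smulSet [AddCommGroup R] (ℳ : GModData Γ R M) (J : AddSubgroup R) : AddSubgroup M :=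
  AddSubgroup.closure {x : M | ∃ (m : M) (a : R), a ∈ J ∧ x = ℳ.smul m a}

open scoped Classical in
/-- The direct sum `⊕_{j ∈ J} M_j` of graded right modules, with grading
`(⊕_j M_j)_γ = ⊕_j (M_j)_γ`. -/
noncomputable def dsum {J : Type u} {Mf : J → Type u} [∀ j, AddCommGroup (Mf j)]
    (df : ∀ j, GModData Γ R (Mf j)) : GModData Γ R (Π₀ j, Mf j) where
  smul m a :=
    if h : ∃ y : Π₀ j, Mf j, ∀ j, y j = (df j).smul (m j) a then h.choose else 0
  component := fun γ => ⨅ j : J, ((df j).component γ).comap (DFinsupp.evalAddMonoidHom j)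

/-- A descending chain of graded submodules is tight if
`Γ'₀(M_i/M_{i+1}) ⊇ Γ'₀(M_{i+1}/M_{i+2})` for all `i`. -/
def TightDesc (ℳ : GModData Γ R M) (c : ℕ → AddSubgroup M) : Prop :=
  (∀ i, ℳ.IsGrSub (c i)) ∧ (∀ i, c (i + 1) ≤ c i) ∧
  ∀ i, (ℳ.subquot (c (i + 2)) (c (i + 1))).partSupport ⊆
    (ℳ.subquot (c (i + 1)) (c i)).partSupport

/-- An ascending chain of graded submodules is tight if
`Γ'₀(M_{i+1}/M_i) ⊇ Γ'₀(M_{i+2}/M_{i+1})` for all `i`. -/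
def TightAsc (ℳ : GModData Γ R M) (c : ℕ → AddSubgroup M) : Prop :=
  (∀ i, ℳ.IsGrSub (c i)) ∧ (∀ i, c i ≤ c (i + 1)) ∧
  ∀ i, (ℳ.subquot (c (i + 1)) (c (i + 2))).partSupport ⊆
    (ℳ.subquot (c i) (c (i + 1))).partSupport

/-- `M` is strongly `Γ₀`-artinian: every tight descending chain of graded
submodules stabilizes. -/
def StronglyG0Artinian (ℳ : GModData Γ R M) : Prop :=
  ∀ c : ℕ → AddSubgroup M, ℳ.TightDesc c → ∃ n, ∀ m, n ≤ m → c m = c n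

/-- `M` is strongly `Γ₀`-noetherian: every tight ascending chain of graded
submodules stabilizes. -/
def StronglyG0Noetherian (ℳ : GModData Γ R M) : Prop :=
  ∀ c : ℕ → AddSubgroup M, ℳ.TightAsc c → ∃ n, ∀ m, n ≤ m → c m = c n

end GModData

/-- `E` is a gr-injective graded right `R`-module: for all graded right `R`-modules
`M`, `N`, every injective gr-homomorphism `g : N → M` and every gr-homomorphism
`h : N → E`, there is a gr-homomorphism `h' : M → E` with `h' ∘ g = h`. -/
def GrInjective {R : Type u} [AddCommGroup R] (𝒜 : GRingData Γ R) {E : Type u}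
    [AddCommGroup E] (ℰ : GModData Γ R E) : Prop :=
  ∀ (M N : Type u) [AddCommGroup M] [AddCommGroup N]
    (ℳ : GModData Γ R M) (𝒩 : GModData Γ R N),
    ℳ.IsGraded 𝒜 → 𝒩.IsGraded 𝒜 →
    ∀ g : N → M, GModData.IsGrHom 𝒩 ℳ g → Function.Injective g →
    ∀ h : N → E, GModData.IsGrHom 𝒩 ℰ h →
    ∃ h' : M → E, GModData.IsGrHom ℳ ℰ h' ∧ ∀ y : N, h' (g y) = h y

/-- A bundled `Γ`-graded right module over the graded ring `𝒜`. -/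
structure GrModule (Γ : Type u) [Groupoid.{u} Γ] {R : Type u} [AddCommGroup R]
    (𝒜 : GRingData Γ R) : Type (u + 1) where
  carrier : Type u
  [addCommGroup : AddCommGroup carrier]
  data : GModData Γ R carrier
  graded : data.IsGraded 𝒜

attribute [instance] GrModule.addCommGroup

namespace GRingData

variable {R : Type u} [AddCommGroup R]

/-- `R` is right `Γ₀`-noetherian. -/
def RightG0Noetherian (𝒜 : GRingData Γ R) : Prop := 𝒜.toMod.G0Noetherian

/-- `R` is right `Γ₀`-artinian. -/
def RightG0Artinian (𝒜 : GRingData Γ R) : Prop := 𝒜.toMod.G0Artinian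

/-- The principal right ideal `aR`. -/
def principal (𝒜 : GRingData Γ R) (a : R) : AddSubgroup R :=
  AddSubgroup.closure {x : R | ∃ b : R, x = 𝒜.mul a b}

/-- A gr-principal graded right ideal: one of the form `aR` with `a` homogeneous. -/
def IsGrPrincipal (𝒜 : GRingData Γ R) (N : AddSubgroup R) : Prop :=
  ∃ a : R, 𝒜.toMod.IsHomogeneous a ∧ N = 𝒜.principal a

/-- `N` is a graded left ideal of `R`, i.e. a graded submodule of `_R R`. -/
def IsGrLeftIdeal (𝒜 : GRingData Γ R) (N : AddSubgroup R) : Prop :=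
  (∀ m ∈ N, ∀ a : R, 𝒜.mul a m ∈ N) ∧
  ∀ n ∈ N, n ∈ AddSubgroup.closure {x : R | x ∈ N ∧ 𝒜.toMod.IsHomogeneous x}

/-- `N` is a gr-maximal graded left ideal of `R`. -/
def IsGrMaxLeftIdeal (𝒜 : GRingData Γ R) (N : AddSubgroup R) : Prop :=
  𝒜.IsGrLeftIdeal N ∧ N ≠ ⊤ ∧
    ∀ L : AddSubgroup R, 𝒜.IsGrLeftIdeal L → N ≤ L → L = N ∨ L = ⊤

/-- The graded Jacobson radical of `R` as a left module over itself:
the intersection of all gr-maximal graded left ideals. -/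
def lRad (𝒜 : GRingData Γ R) : AddSubgroup R := sInf {N | 𝒜.IsGrMaxLeftIdeal N}

/-- `N` is a graded (two-sided) ideal of `R`. -/
def IsGrIdeal (𝒜 : GRingData Γ R) (N : AddSubgroup R) : Prop :=
  𝒜.toMod.IsGrSub N ∧ ∀ m ∈ N, ∀ a : R, 𝒜.mul a m ∈ N

/-- `N ⊆ R_e` is a left ideal of the unital ring `R_e`. -/
def IsLeftIdealIn (𝒜 : GRingData Γ R) (e : Γ) (N : Set R) : Prop :=
  N ⊆ (𝒜.component (𝟙 e) : Set R) ∧ (0 : R) ∈ N ∧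
  (∀ a ∈ N, ∀ b ∈ N, a - b ∈ N) ∧
  ∀ r ∈ 𝒜.component (𝟙 e), ∀ a ∈ N, 𝒜.mul r a ∈ N

/-- `N` is a maximal left ideal of the unital ring `R_e`. -/
def IsMaxLeftIdealIn (𝒜 : GRingData Γ R) (e : Γ) (N : Set R) : Prop :=
  𝒜.IsLeftIdealIn e N ∧ N ≠ (𝒜.component (𝟙 e) : Set R) ∧
  ∀ L : Set R, 𝒜.IsLeftIdealIn e L → N ⊆ L →
    L = N ∨ L = (𝒜.component (𝟙 e) : Set R)

/-- The Jacobson radical `rad(R_e)` of the unital ring `R_e`, as a subset of `R`: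
the intersection of all maximal left ideals of `R_e`. -/
def radIn (𝒜 : GRingData Γ R) (e : Γ) : Set R :=
  (𝒜.component (𝟙 e) : Set R) ∩ ⋂₀ {N : Set R | 𝒜.IsMaxLeftIdealIn e N}

/-- The quotient graded ring `R/I` of `R` by a graded ideal `I`. -/
noncomputable def quotRing (𝒜 : GRingData Γ R) (I : AddSubgroup R) :
    GRingData Γ (R ⧸ I) where
  mul x y := QuotientAddGroup.mk (𝒜.mul (Quotient.out x) (Quotient.out y))
  component := fun γ => (𝒜.component γ).map (QuotientAddGroup.mk' I)
  one e := QuotientAddGroup.mk (𝒜.one e)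

/-- `R` is a gr-semisimple ring. -/
def GrSemisimpleRing (𝒜 : GRingData Γ R) : Prop := 𝒜.toMod.GrSemisimple

/-- `R` is gr-semilocal: the `Γ`-graded ring `R/rad^gr(R)` is gr-semisimple. -/
noncomputable def GrSemilocal (𝒜 : GRingData Γ R) : Prop :=
  ((𝒜.quotRing 𝒜.toMod.grRad).GrSemisimpleRing)

end GRingData

namespace GrAux
open scoped Classical

/-- Direct-sum data for a family of subgroups indexed by `GrIdx Γ`. -/
structure DirSum {A : Type u} [AddCommGroup A] (comp : GrIdx Γ → AddSubgroup A) : Prop where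
  dec : ∀ x : A, ∃ (s : Finset (GrIdx Γ)) (cf : GrIdx Γ → A),
      (∀ γ ∈ s, cf γ ∈ comp γ) ∧ x = ∑ γ ∈ s, cf γ
  ind : ∀ (s : Finset (GrIdx Γ)) (cf : GrIdx Γ → A),
      (∀ γ ∈ s, cf γ ∈ comp γ) → ∑ γ ∈ s, cf γ = 0 → ∀ γ ∈ s, cf γ = 0

namespace DirSum

variable {A : Type u} [AddCommGroup A] {comp : GrIdx Γ → AddSubgroup A}
  (h : DirSum comp)

noncomputable def supp (x : A) : Finset (GrIdx Γ) := (h.dec x).choose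

noncomputable def proj (γ : GrIdx Γ) (x : A) : A :=
  if γ ∈ h.supp x then (h.dec x).choose_spec.choose γ else 0

lemma proj_mem (γ : GrIdx Γ) (x : A) : h.proj γ x ∈ comp γ := by
  unfold proj
  split
  · exact (h.dec x).choose_spec.choose_spec.1 γ ‹_›
  · exact zero_mem _

lemma proj_not_mem {γ : GrIdx Γ} {x : A} (hγ : γ ∉ h.supp x) : h.proj γ x = 0 := by
  unfold proj; rw [if_neg hγ]

lemma sum_proj (x : A) : x = ∑ γ ∈ h.supp x, h.proj γ x := by
  conv_lhs => rw [(h.dec x).choose_spec.choose_spec.2]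
  refine Finset.sum_congr rfl fun γ hγ => ?_
  exact (if_pos hγ).symm

lemma sum_proj_superset {t : Finset (GrIdx Γ)} {x : A} (ht : h.supp x ⊆ t) :
    x = ∑ γ ∈ t, h.proj γ x := by
  rw [← Finset.sum_subset ht (fun γ _ hγ => h.proj_not_mem hγ)]
  exact h.sum_proj x

lemma uniq {t : Finset (GrIdx Γ)} {g : GrIdx Γ → A} {x : A}
    (hg : ∀ γ ∈ t, g γ ∈ comp γ) (hx : x = ∑ γ ∈ t, g γ) (γ : GrIdx Γ) :
    h.proj γ x = if γ ∈ t then g γ else 0 := by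
  classical
  set u := t ∪ h.supp x with hu
  have hsum : ∑ δ ∈ u, ((if δ ∈ t then g δ else 0) - h.proj δ x) = 0 := by
    rw [Finset.sum_sub_distrib]
    have e1 : ∑ δ ∈ u, (if δ ∈ t then g δ else 0) = ∑ δ ∈ t, g δ := by
      rw [Finset.sum_ite_mem, Finset.union_inter_cancel_left]
    have e2 : ∑ δ ∈ u, h.proj δ x = x :=
      (h.sum_proj_superset (Finset.subset_union_right)).symm
    rw [e1, e2, ← hx, sub_self]
  have hmem : ∀ δ ∈ u, ((if δ ∈ t then g δ else 0) - h.proj δ x) ∈ comp δ := by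
    intro δ _
    refine sub_mem ?_ (h.proj_mem δ x)
    split
    · exact hg δ ‹_›
    · exact zero_mem _
  have key := h.ind u _ hmem hsum
  by_cases hγ : γ ∈ u
  · exact (sub_eq_zero.mp (key γ hγ)).symm
  · have h1 : γ ∉ t := fun hc => hγ (Finset.mem_union_left _ hc)
    have h2 : γ ∉ h.supp x := fun hc => hγ (Finset.mem_union_right _ hc)
    rw [if_neg h1, h.proj_not_mem h2]

lemma proj_zero (γ : GrIdx Γ) : h.proj γ (0 : A) = 0 := by
  have := h.uniq (t := ∅) (g := fun _ => 0) (x := 0) (by simp) (by simp) γ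
  simpa using this

lemma proj_add (γ : GrIdx Γ) (x y : A) :
    h.proj γ (x + y) = h.proj γ x + h.proj γ y := by
  classical
  set t := h.supp x ∪ h.supp y with ht
  have hmem : ∀ δ ∈ t, h.proj δ x + h.proj δ y ∈ comp δ :=
    fun δ _ => add_mem (h.proj_mem δ x) (h.proj_mem δ y)
  have hsum : x + y = ∑ δ ∈ t, (h.proj δ x + h.proj δ y) := by
    rw [Finset.sum_add_distrib,
      ← h.sum_proj_superset (Finset.subset_union_left),
      ← h.sum_proj_superset (Finset.subset_union_right)]
  have := h.uniq hmem hsum γ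
  rw [this]
  by_cases hγ : γ ∈ t
  · rw [if_pos hγ]
  · rw [if_neg hγ,
      h.proj_not_mem (fun hc => hγ (Finset.mem_union_left _ hc)),
      h.proj_not_mem (fun hc => hγ (Finset.mem_union_right _ hc)), add_zero]

lemma proj_of_mem {σ : GrIdx Γ} {x : A} (hx : x ∈ comp σ) : h.proj σ x = x := by
  classical
  have := h.uniq (t := {σ}) (g := fun _ => x) (x := x) (by simpa using hx) (by simp) σ
  simpa using this

lemma proj_of_mem_ne {σ γ : GrIdx Γ} {x : A} (hx : x ∈ comp σ) (hγ : γ ≠ σ) :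
    h.proj γ x = 0 := by
  classical
  have := h.uniq (t := {σ}) (g := fun _ => x) (x := x) (by simpa using hx) (by simp) γ
  rwa [if_neg (by simpa using hγ)] at this

lemma proj_sum (γ : GrIdx Γ) {ι : Type*} (t : Finset ι) (f : ι → A) :
    h.proj γ (∑ i ∈ t, f i) = ∑ i ∈ t, h.proj γ (f i) := by
  classical
  induction t using Finset.induction_on with
  | empty => simpa using h.proj_zero γ
  | @insert _ _ hni ih =>
      rw [Finset.sum_insert hni, Finset.sum_insert hni, h.proj_add, ih]

end DirSum
end GrAux

section InjectiveGroups

lemma abelian_extension {A B D : Type u} [AddCommGroup A] [AddCommGroup B] [AddCommGroup D]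
    [Injective (AddCommGrpCat.of D)]
    (i : A →+ B) (hi : Function.Injective i) (f : A →+ D) :
    ∃ F : B →+ D, ∀ a, F (i a) = f a := by
  have : Mono (AddCommGrpCat.ofHom i) := (AddCommGrpCat.mono_iff_injective _).mpr hi
  refine ⟨(Injective.factorThru (AddCommGrpCat.ofHom f) (AddCommGrpCat.ofHom i) :
      AddCommGrpCat.of B ⟶ AddCommGrpCat.of D).hom, fun a => ?_⟩
  have := Injective.comp_factorThru (AddCommGrpCat.ofHom f) (AddCommGrpCat.ofHom i)
  exact congrArg (fun g => g.hom a) this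

noncomputable def Dgrp (M : Type u) [AddCommGroup M] : AddCommGrpCat.{u} :=
  Injective.under (AddCommGrpCat.of M)

noncomputable instance DgrpInj (M : Type u) [AddCommGroup M] :
    Injective (AddCommGrpCat.of ↥(Dgrp M)) :=
  Injective.injective_under (AddCommGrpCat.of M)

noncomputable def iotaM (M : Type u) [AddCommGroup M] : M →+ ↥(Dgrp M) :=
  (Injective.ι (AddCommGrpCat.of M) : AddCommGrpCat.of M ⟶ Dgrp M).hom

lemma iotaM_injective (M : Type u) [AddCommGroup M] : Function.Injective (iotaM M) :=
  (AddCommGrpCat.mono_iff_injective _).mp (Injective.ι_mono (AddCommGrpCat.of M))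

end InjectiveGroups

namespace GrAux

section ECon

open scoped Classical
set_option linter.unusedSectionVars false

variable {R : Type u} [AddCommGroup R]
  (𝒜 : GRingData Γ R) (h𝒜 : 𝒜.IsObjectUnital) (D : Type u) [AddCommGroup D]

include h𝒜

lemma mul_zero' (a : R) : 𝒜.mul a 0 = 0 := by
  have h := h𝒜.left_distrib a 0 0
  rw [add_zero] at h
  exact (add_eq_left).mp h.symm

lemma zero_mul' (a : R) : 𝒜.mul 0 a = 0 := by
  have h := h𝒜.right_distrib 0 0 a
  rw [add_zero] at h
  exact (add_eq_left).mp h.symm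

/-- Left multiplication by `a`, as an additive map. -/
def mulL (a : R) : R →+ R :=
  AddMonoidHom.mk' (𝒜.mul a) (h𝒜.left_distrib a)

/-- Right multiplication by `b`, as an additive map. -/
def mulRhom (b : R) : R →+ R :=
  AddMonoidHom.mk' (fun a => 𝒜.mul a b) (fun a c => h𝒜.right_distrib a c b)

/-- The ring `R` as a direct sum of its homogeneous components. -/
def ringDS : DirSum (fun γ : GrIdx Γ => 𝒜.component γ.2.2) :=
  ⟨h𝒜.decompose, h𝒜.independent⟩

/-- The additive maps `R → D` vanishing on all homogeneous components `R_δ`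
with `r(δ) ≠ e`. -/
def FSub (e : Γ) : AddSubgroup (R →+ D) where
  carrier := {F | ∀ γ : GrIdx Γ, γ.2.1 ≠ e → ∀ b ∈ 𝒜.component γ.2.2, F b = 0}
  add_mem' := by
    intro F G hF hG γ hγ b hb
    simp [hF γ hγ b hb, hG γ hγ b hb]
  zero_mem' := by intro γ hγ b hb; simp
  neg_mem' := by
    intro F hF γ hγ b hb
    simp [hF γ hγ b hb]

/-- The carrier of the gr-injective module: `⊕_γ Hom(R, D)_γ`. -/
abbrev EC : Type u := Π₀ γ : GrIdx Γ, ↥(FSub 𝒜 D γ.1)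

/-- Elements of `EC` concentrated in degree `σ`. -/
def Econc (σ : GrIdx Γ) : AddSubgroup (EC 𝒜 D) where
  carrier := {x | ∀ δ, δ ≠ σ → x δ = 0}
  add_mem' := by
    intro x y hx hy δ hδ
    rw [DFinsupp.add_apply, hx δ hδ, hy δ hδ, add_zero]
  zero_mem' := by intro δ _; rfl
  neg_mem' := by
    intro x hx δ hδ
    rw [DFinsupp.neg_apply, hx δ hδ, neg_zero]

lemma single_mem_Econc (σ : GrIdx Γ) (v : ↥(FSub 𝒜 D σ.1)) :
    DFinsupp.single σ v ∈ Econc 𝒜 D σ :=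
  fun _ hδ => DFinsupp.single_eq_of_ne hδ

lemma eq_single_of_mem_Econc {σ : GrIdx Γ} {x : EC 𝒜 D} (hx : x ∈ Econc 𝒜 D σ) :
    x = DFinsupp.single σ (x σ) := by
  ext δ
  by_cases h : δ = σ
  · subst h; rw [DFinsupp.single_eq_same]
  · rw [hx δ h, DFinsupp.single_eq_of_ne h]

lemma single_congr {i i' : GrIdx Γ} (h : i = i') (v : ↥(FSub 𝒜 D i.1))
    (v' : ↥(FSub 𝒜 D i'.1)) (hv : (v : R →+ D) = (v' : R →+ D)) :
    (DFinsupp.single i v : EC 𝒜 D) = DFinsupp.single i' v' := by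
  subst h
  exact congrArg _ (Subtype.ext hv)

lemma sum_single_apply (t : Finset (GrIdx Γ)) (v : ∀ γ : GrIdx Γ, ↥(FSub 𝒜 D γ.1))
    (δ : GrIdx Γ) :
    (∑ γ ∈ t, DFinsupp.single γ (v γ)) δ = if δ ∈ t then v δ else 0 := by
  induction t using Finset.induction_on with
  | empty => simp
  | @insert γ t hni ih =>
      rw [Finset.sum_insert hni, DFinsupp.add_apply, ih]
      by_cases h : δ = γ
      · subst h
        rw [DFinsupp.single_eq_same, if_pos (Finset.mem_insert_self _ _),
          if_neg hni, add_zero]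
      · rw [DFinsupp.single_eq_of_ne h, zero_add]
        by_cases h2 : δ ∈ t
        · rw [if_pos h2, if_pos (Finset.mem_insert_of_mem h2)]
        · rw [if_neg h2, if_neg (by simp [Finset.mem_insert, h, h2])]

/-- `b ↦ F (r * b)` as an additive map. -/
def mulF (F : R →+ D) (r : R) : R →+ D := F.comp (mulL 𝒜 h𝒜 r)

lemma mulF_apply (F : R →+ D) (r b : R) : mulF 𝒜 h𝒜 D F r b = F (𝒜.mul r b) := rfl

lemma mulF_mem (τ : GrIdx Γ) (F : R →+ D) {r : R} (hr : r ∈ 𝒜.component τ.2.2) :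
    mulF 𝒜 h𝒜 D F r ∈ FSub 𝒜 D τ.1 := by
  intro δ hδ b hb
  show F (𝒜.mul r b) = 0
  rw [h𝒜.mul_eq_zero τ.2.2 δ.2.2 hδ hr hb, F.map_zero]

lemma mulF_zero_r (F : R →+ D) : mulF 𝒜 h𝒜 D F 0 = 0 := by
  ext b
  show F (𝒜.mul 0 b) = 0
  rw [zero_mul' 𝒜 h𝒜, F.map_zero]

lemma mulF_add_r (F : R →+ D) (r s : R) :
    mulF 𝒜 h𝒜 D F (r + s) = mulF 𝒜 h𝒜 D F r + mulF 𝒜 h𝒜 D F s := by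
  ext b
  show F (𝒜.mul (r + s) b) = F (𝒜.mul r b) + F (𝒜.mul s b)
  rw [h𝒜.right_distrib, F.map_add]

lemma mulF_zero_F (r : R) : mulF 𝒜 h𝒜 D 0 r = 0 := rfl

lemma mulF_add_F (F G : R →+ D) (r : R) :
    mulF 𝒜 h𝒜 D (F + G) r = mulF 𝒜 h𝒜 D F r + mulF 𝒜 h𝒜 D G r := rfl

/-- The basic action: `single σ F` acted on by (the `τ`-component of) `c`. -/
noncomputable def act (σ τ : GrIdx Γ) (F : R →+ D) (c : R) : EC 𝒜 D :=
  if h : τ.2.1 = σ.1 then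
    DFinsupp.single ⟨τ.1, σ.2.1, τ.2.2 ≫ eqToHom h ≫ σ.2.2⟩
      ⟨mulF 𝒜 h𝒜 D F ((ringDS 𝒜 h𝒜).proj τ c),
        mulF_mem 𝒜 h𝒜 D τ F ((ringDS 𝒜 h𝒜).proj_mem τ c)⟩
  else 0

lemma act_pos {e f g : Γ} (σm : e ⟶ f) (τm : g ⟶ e) (F : R →+ D) (c : R) :
    act 𝒜 h𝒜 D ⟨e, f, σm⟩ ⟨g, e, τm⟩ F c
      = DFinsupp.single (⟨g, f, τm ≫ σm⟩ : GrIdx Γ)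
          ⟨mulF 𝒜 h𝒜 D F ((ringDS 𝒜 h𝒜).proj ⟨g, e, τm⟩ c),
            mulF_mem 𝒜 h𝒜 D ⟨g, e, τm⟩ F ((ringDS 𝒜 h𝒜).proj_mem ⟨g, e, τm⟩ c)⟩ := by
  unfold act
  rw [dif_pos rfl]
  exact single_congr 𝒜 h𝒜 D (by rw [eqToHom_refl, Category.id_comp]) _ _ rfl

lemma act_neg {σ τ : GrIdx Γ} (hne : τ.2.1 ≠ σ.1) (F : R →+ D) (c : R) :
    act 𝒜 h𝒜 D σ τ F c = 0 := by
  unfold act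
  rw [dif_neg hne]

lemma act_zero_of_proj {σ τ : GrIdx Γ} (F : R →+ D) {c : R}
    (hc : (ringDS 𝒜 h𝒜).proj τ c = 0) : act 𝒜 h𝒜 D σ τ F c = 0 := by
  unfold act
  split
  · simp only [hc, mulF_zero_r]
    exact DFinsupp.single_zero _
  · rfl

lemma act_zero_F (σ τ : GrIdx Γ) (c : R) : act 𝒜 h𝒜 D σ τ 0 c = 0 := by
  unfold act
  split
  · simp only [mulF_zero_F]
    exact DFinsupp.single_zero _
  · rfl

lemma act_add_F (σ τ : GrIdx Γ) (F G : R →+ D) (c : R) :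
    act 𝒜 h𝒜 D σ τ (F + G) c = act 𝒜 h𝒜 D σ τ F c + act 𝒜 h𝒜 D σ τ G c := by
  unfold act
  split
  · rw [← DFinsupp.single_add]
    congr 1
  · rw [add_zero]

lemma act_add_c (σ τ : GrIdx Γ) (F : R →+ D) (c c' : R) :
    act 𝒜 h𝒜 D σ τ F (c + c') = act 𝒜 h𝒜 D σ τ F c + act 𝒜 h𝒜 D σ τ F c' := by
  unfold act
  split
  · rw [← DFinsupp.single_add]
    congr 1
    refine Subtype.ext ?_
    show mulF 𝒜 h𝒜 D F ((ringDS 𝒜 h𝒜).proj τ (c + c')) = _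
    rw [(ringDS 𝒜 h𝒜).proj_add, mulF_add_r]
    rfl
  · rw [add_zero]

lemma act_zero_c (σ τ : GrIdx Γ) (F : R →+ D) : act 𝒜 h𝒜 D σ τ F 0 = 0 :=
  act_zero_of_proj 𝒜 h𝒜 D F ((ringDS 𝒜 h𝒜).proj_zero τ)

/-- `act σ τ F` bundled as an additive map in `c`. -/
noncomputable def actHom (σ τ : GrIdx Γ) (F : R →+ D) : R →+ EC 𝒜 D :=
  AddMonoidHom.mk' (act 𝒜 h𝒜 D σ τ F) (act_add_c 𝒜 h𝒜 D σ τ F)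

end ECon

end GrAux

namespace GrAux

section ESmul

open scoped Classical
set_option linter.unusedSectionVars false

variable {R : Type u} [AddCommGroup R]
  (𝒜 : GRingData Γ R) (h𝒜 : 𝒜.IsObjectUnital) (D : Type u) [AddCommGroup D]

include h𝒜

/-- The right action of `R` on `EC`. -/
noncomputable def Esmul (x : EC 𝒜 D) (a : R) : EC 𝒜 D :=
  ∑ σ ∈ x.support, ∑ τ ∈ (ringDS 𝒜 h𝒜).supp a, act 𝒜 h𝒜 D σ τ ↑(x σ) a

lemma Esmul_eq {x : EC 𝒜 D} {a : R} {S T : Finset (GrIdx Γ)}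
    (hS : x.support ⊆ S) (hT : (ringDS 𝒜 h𝒜).supp a ⊆ T) :
    Esmul 𝒜 h𝒜 D x a = ∑ σ ∈ S, ∑ τ ∈ T, act 𝒜 h𝒜 D σ τ ↑(x σ) a := by
  unfold Esmul
  have h1 : ∀ σ : GrIdx Γ, ∑ τ ∈ (ringDS 𝒜 h𝒜).supp a, act 𝒜 h𝒜 D σ τ ↑(x σ) a
      = ∑ τ ∈ T, act 𝒜 h𝒜 D σ τ ↑(x σ) a :=
    fun σ => Finset.sum_subset hT fun τ _ hτ =>
      act_zero_of_proj 𝒜 h𝒜 D _ ((ringDS 𝒜 h𝒜).proj_not_mem hτ)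
  rw [Finset.sum_congr rfl fun σ _ => h1 σ]
  refine Finset.sum_subset hS fun σ _ hσ => ?_
  have hx0 : x σ = 0 := DFinsupp.notMem_support_iff.mp hσ
  refine Finset.sum_eq_zero fun τ _ => ?_
  rw [hx0]
  exact act_zero_F 𝒜 h𝒜 D σ τ a

lemma Esmul_add_x (x y : EC 𝒜 D) (a : R) :
    Esmul 𝒜 h𝒜 D (x + y) a = Esmul 𝒜 h𝒜 D x a + Esmul 𝒜 h𝒜 D y a := by
  classical
  set S := x.support ∪ y.support ∪ (x + y).support with hS
  rw [Esmul_eq 𝒜 h𝒜 D (S := S) (T := (ringDS 𝒜 h𝒜).supp a)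
      (Finset.subset_union_right) subset_rfl,
    Esmul_eq 𝒜 h𝒜 D (S := S) (T := (ringDS 𝒜 h𝒜).supp a)
      ((Finset.subset_union_left).trans Finset.subset_union_left) subset_rfl,
    Esmul_eq 𝒜 h𝒜 D (S := S) (T := (ringDS 𝒜 h𝒜).supp a)
      ((Finset.subset_union_right).trans Finset.subset_union_left) subset_rfl,
    ← Finset.sum_add_distrib]
  refine Finset.sum_congr rfl fun σ _ => ?_
  rw [← Finset.sum_add_distrib]
  refine Finset.sum_congr rfl fun τ _ => ?_
  rw [DFinsupp.add_apply, AddSubgroup.coe_add, act_add_F]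

lemma Esmul_zero_x (a : R) : Esmul 𝒜 h𝒜 D 0 a = 0 := by
  unfold Esmul
  rw [DFinsupp.support_zero, Finset.sum_empty]

lemma Esmul_sum_x {ι : Type*} (t : Finset ι) (f : ι → EC 𝒜 D) (a : R) :
    Esmul 𝒜 h𝒜 D (∑ i ∈ t, f i) a = ∑ i ∈ t, Esmul 𝒜 h𝒜 D (f i) a := by
  classical
  induction t using Finset.induction_on with
  | empty => simpa using Esmul_zero_x 𝒜 h𝒜 D a
  | @insert i t hni ih =>
      rw [Finset.sum_insert hni, Finset.sum_insert hni, Esmul_add_x, ih]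

lemma Esmul_single (γ : GrIdx Γ) (v : ↥(FSub 𝒜 D γ.1)) (a : R)
    {T : Finset (GrIdx Γ)} (hT : (ringDS 𝒜 h𝒜).supp a ⊆ T) :
    Esmul 𝒜 h𝒜 D (DFinsupp.single γ v) a = ∑ τ ∈ T, act 𝒜 h𝒜 D γ τ ↑v a := by
  rw [Esmul_eq 𝒜 h𝒜 D (S := {γ}) (T := T)
    (DFinsupp.support_single_subset) hT, Finset.sum_singleton,
    DFinsupp.single_eq_same]

lemma Esmul_add_a (x : EC 𝒜 D) (a b : R) :
    Esmul 𝒜 h𝒜 D x (a + b) = Esmul 𝒜 h𝒜 D x a + Esmul 𝒜 h𝒜 D x b := by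
  classical
  set T := (ringDS 𝒜 h𝒜).supp a ∪ (ringDS 𝒜 h𝒜).supp b
      ∪ (ringDS 𝒜 h𝒜).supp (a + b) with hT
  rw [Esmul_eq 𝒜 h𝒜 D (S := x.support) (T := T) subset_rfl
      (Finset.subset_union_right),
    Esmul_eq 𝒜 h𝒜 D (S := x.support) (T := T) subset_rfl
      ((Finset.subset_union_left).trans Finset.subset_union_left),
    Esmul_eq 𝒜 h𝒜 D (S := x.support) (T := T) subset_rfl
      ((Finset.subset_union_right).trans Finset.subset_union_left),
    ← Finset.sum_add_distrib]
  refine Finset.sum_congr rfl fun σ _ => ?_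
  rw [← Finset.sum_add_distrib]
  exact Finset.sum_congr rfl fun τ _ => act_add_c 𝒜 h𝒜 D σ τ _ a b

lemma Esmul_homog {σ τ : GrIdx Γ} {x : EC 𝒜 D} {a : R}
    (hx : x ∈ Econc 𝒜 D σ) (ha : a ∈ 𝒜.component τ.2.2) :
    Esmul 𝒜 h𝒜 D x a = act 𝒜 h𝒜 D σ τ ↑(x σ) a := by
  conv_lhs => rw [eq_single_of_mem_Econc 𝒜 h𝒜 D hx]
  rw [Esmul_single 𝒜 h𝒜 D σ (x σ) a
    (T := insert τ ((ringDS 𝒜 h𝒜).supp a)) (Finset.subset_insert _ _)]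
  exact Finset.sum_eq_single_of_mem τ (Finset.mem_insert_self _ _)
    fun ρ _ hρ => act_zero_of_proj 𝒜 h𝒜 D _
      ((ringDS 𝒜 h𝒜).proj_of_mem_ne ha hρ)

lemma FSub_one_mul {e : Γ} {F : R →+ D} (hF : F ∈ FSub 𝒜 D e) (b : R) :
    F (𝒜.mul (𝒜.one e) b) = F b := by
  conv_lhs => rw [(ringDS 𝒜 h𝒜).sum_proj b]
  conv_rhs => rw [(ringDS 𝒜 h𝒜).sum_proj b]
  calc F (𝒜.mul (𝒜.one e) (∑ δ ∈ (ringDS 𝒜 h𝒜).supp b, (ringDS 𝒜 h𝒜).proj δ b))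
      = F (∑ δ ∈ (ringDS 𝒜 h𝒜).supp b, 𝒜.mul (𝒜.one e) ((ringDS 𝒜 h𝒜).proj δ b)) := by
        rw [show 𝒜.mul (𝒜.one e) (∑ δ ∈ (ringDS 𝒜 h𝒜).supp b, (ringDS 𝒜 h𝒜).proj δ b)
            = ∑ δ ∈ (ringDS 𝒜 h𝒜).supp b, 𝒜.mul (𝒜.one e) ((ringDS 𝒜 h𝒜).proj δ b)
          from map_sum (mulL 𝒜 h𝒜 (𝒜.one e)) _ _]
    _ = ∑ δ ∈ (ringDS 𝒜 h𝒜).supp b, F (𝒜.mul (𝒜.one e) ((ringDS 𝒜 h𝒜).proj δ b)) :=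
        map_sum F _ _
    _ = ∑ δ ∈ (ringDS 𝒜 h𝒜).supp b, F ((ringDS 𝒜 h𝒜).proj δ b) := by
        refine Finset.sum_congr rfl fun δ _ => ?_
        by_cases hδ : δ.2.1 = e
        · rw [← hδ]
          exact congrArg F (h𝒜.one_mul δ.2.2 ((ringDS 𝒜 h𝒜).proj_mem δ b))
        · rw [h𝒜.mul_eq_zero (𝟙 e) δ.2.2 hδ (h𝒜.one_mem e)
            ((ringDS 𝒜 h𝒜).proj_mem δ b), F.map_zero,
            hF δ hδ _ ((ringDS 𝒜 h𝒜).proj_mem δ b)]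
    _ = F (∑ δ ∈ (ringDS 𝒜 h𝒜).supp b, (ringDS 𝒜 h𝒜).proj δ b) := (map_sum F _ _).symm

lemma mul_decomp (a b : R) :
    𝒜.mul a b = ∑ τ ∈ (ringDS 𝒜 h𝒜).supp a, ∑ ρ ∈ (ringDS 𝒜 h𝒜).supp b,
      𝒜.mul ((ringDS 𝒜 h𝒜).proj τ a) ((ringDS 𝒜 h𝒜).proj ρ b) := by
  conv_lhs => rw [(ringDS 𝒜 h𝒜).sum_proj a]
  conv_lhs => rw [(ringDS 𝒜 h𝒜).sum_proj b]
  calc 𝒜.mul (∑ τ ∈ (ringDS 𝒜 h𝒜).supp a, (ringDS 𝒜 h𝒜).proj τ a)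
        (∑ ρ ∈ (ringDS 𝒜 h𝒜).supp b, (ringDS 𝒜 h𝒜).proj ρ b)
      = ∑ τ ∈ (ringDS 𝒜 h𝒜).supp a, 𝒜.mul ((ringDS 𝒜 h𝒜).proj τ a)
        (∑ ρ ∈ (ringDS 𝒜 h𝒜).supp b, (ringDS 𝒜 h𝒜).proj ρ b) :=
      map_sum (mulRhom 𝒜 h𝒜 _) _ _
    _ = _ := Finset.sum_congr rfl fun τ _ => map_sum (mulL 𝒜 h𝒜 _) _ _

/-- The composite index of a composable pair (junk value otherwise). -/
noncomputable def pairIdx (τ ρ : GrIdx Γ) : GrIdx Γ :=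
  if h : ρ.2.1 = τ.1 then ⟨ρ.1, τ.2.1, ρ.2.2 ≫ eqToHom h ≫ τ.2.2⟩ else τ

omit h𝒜

lemma pairIdx_pos {g e' e : Γ} (τm : e' ⟶ e) (ρm : g ⟶ e') :
    pairIdx (⟨e', e, τm⟩ : GrIdx Γ) ⟨g, e', ρm⟩ = ⟨g, e, ρm ≫ τm⟩ := by
  unfold pairIdx
  rw [dif_pos rfl, eqToHom_refl, Category.id_comp]

lemma pairIdx_snd (τ ρ : GrIdx Γ) : (pairIdx τ ρ).2.1 = τ.2.1 := by
  unfold pairIdx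
  by_cases h : ρ.2.1 = τ.1
  · rw [dif_pos h]
  · rw [dif_neg h]

include h𝒜

lemma mul_proj_mem {τ ρ : GrIdx Γ} (h : ρ.2.1 = τ.1) (a b : R) :
    𝒜.mul ((ringDS 𝒜 h𝒜).proj τ a) ((ringDS 𝒜 h𝒜).proj ρ b)
      ∈ (fun γ : GrIdx Γ => 𝒜.component γ.2.2) (pairIdx τ ρ) := by
  obtain ⟨e1, e2, τm⟩ := τ
  obtain ⟨e3, e4, ρm⟩ := ρ
  have h' : e4 = e1 := h
  subst h'
  rw [pairIdx_pos]
  exact h𝒜.mul_mem τm ρm ((ringDS 𝒜 h𝒜).proj_mem ⟨e4, e2, τm⟩ a)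
    ((ringDS 𝒜 h𝒜).proj_mem ⟨e3, e4, ρm⟩ b)

lemma Esmul_mul (x : EC 𝒜 D) (a b : R) :
    Esmul 𝒜 h𝒜 D x (𝒜.mul a b) = Esmul 𝒜 h𝒜 D (Esmul 𝒜 h𝒜 D x a) b := by
  classical
  set T := (ringDS 𝒜 h𝒜).supp a with hTdef
  set T' := (ringDS 𝒜 h𝒜).supp b with hT'def
  set N := (ringDS 𝒜 h𝒜).supp (𝒜.mul a b)
      ∪ (T ×ˢ T').image (fun p => pairIdx p.1 p.2) with hNdef
  conv_rhs => rw [Esmul_eq 𝒜 h𝒜 D (x := x) (a := a) subset_rfl subset_rfl]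
  rw [Esmul_sum_x]
  rw [Finset.sum_congr rfl fun σ (_ : σ ∈ x.support) => Esmul_sum_x 𝒜 h𝒜 D _ _ b]
  rw [Esmul_eq 𝒜 h𝒜 D (x := x) (a := 𝒜.mul a b) (S := x.support) (T := N)
    subset_rfl (Finset.subset_union_left)]
  refine Finset.sum_congr rfl fun σ hσ => ?_
  have hexp : ∀ ν : GrIdx Γ, act 𝒜 h𝒜 D σ ν ↑(x σ) (𝒜.mul a b)
      = ∑ τ ∈ T, ∑ ρ ∈ T', act 𝒜 h𝒜 D σ ν ↑(x σ)
          (𝒜.mul ((ringDS 𝒜 h𝒜).proj τ a) ((ringDS 𝒜 h𝒜).proj ρ b)) := by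
    intro ν
    conv_lhs => rw [mul_decomp 𝒜 h𝒜 a b]
    exact (map_sum (actHom 𝒜 h𝒜 D σ ν ↑(x σ)) _ _).trans
      (Finset.sum_congr rfl fun τ _ => map_sum (actHom 𝒜 h𝒜 D σ ν ↑(x σ)) _ _)
  rw [Finset.sum_congr rfl fun ν (_ : ν ∈ N) => hexp ν]
  rw [Finset.sum_comm]
  refine Finset.sum_congr rfl fun τ hτ => ?_
  rw [Finset.sum_comm]
  by_cases h2 : τ.2.1 = σ.1
  · obtain ⟨e1, e2, σm⟩ := σ
    obtain ⟨e3, e4, τm⟩ := τ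
    have h2' : e4 = e1 := h2
    subst h2'
    rw [act_pos]
    rw [Esmul_single 𝒜 h𝒜 D _ _ b (T := T') subset_rfl]
    refine Finset.sum_congr rfl fun ρ hρ => ?_
    by_cases h1 : ρ.2.1 = e3
    · obtain ⟨e5, e6, ρm⟩ := ρ
      have h1' : e6 = e3 := h1
      subst h1'
      have hNmem : pairIdx (⟨e6, e4, τm⟩ : GrIdx Γ) ⟨e5, e6, ρm⟩ ∈ N := by
        refine Finset.mem_union_right _ (Finset.mem_image.mpr
          ⟨(⟨e6, e4, τm⟩, ⟨e5, e6, ρm⟩), Finset.mem_product.mpr ⟨hτ, hρ⟩, rfl⟩)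
      rw [Finset.sum_eq_single_of_mem _ hNmem (fun ν _ hν =>
        act_zero_of_proj 𝒜 h𝒜 D _
          ((ringDS 𝒜 h𝒜).proj_of_mem_ne (mul_proj_mem 𝒜 h𝒜 rfl a b) hν))]
      rw [pairIdx_pos, act_pos, act_pos]
      refine single_congr 𝒜 h𝒜 D (by rw [Category.assoc]) _ _ ?_
      have hp : (ringDS 𝒜 h𝒜).proj ⟨e5, e4, ρm ≫ τm⟩
          (𝒜.mul ((ringDS 𝒜 h𝒜).proj ⟨e6, e4, τm⟩ a)
            ((ringDS 𝒜 h𝒜).proj ⟨e5, e6, ρm⟩ b))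
          = 𝒜.mul ((ringDS 𝒜 h𝒜).proj ⟨e6, e4, τm⟩ a)
            ((ringDS 𝒜 h𝒜).proj ⟨e5, e6, ρm⟩ b) := by
        have hmm := mul_proj_mem 𝒜 h𝒜 (τ := ⟨e6, e4, τm⟩) (ρ := ⟨e5, e6, ρm⟩) rfl a b
        rw [pairIdx_pos] at hmm
        exact (ringDS 𝒜 h𝒜).proj_of_mem hmm
      ext b'
      show (x _ : R →+ D).1 (𝒜.mul _ b') = _
      rw [hp, h𝒜.mul_assoc]
      rfl
    · rw [act_neg 𝒜 h𝒜 D h1]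
      have hc : 𝒜.mul ((ringDS 𝒜 h𝒜).proj ⟨e3, e4, τm⟩ a) ((ringDS 𝒜 h𝒜).proj ρ b) = 0 :=
        h𝒜.mul_eq_zero τm ρ.2.2 h1 ((ringDS 𝒜 h𝒜).proj_mem ⟨e3, e4, τm⟩ a)
          ((ringDS 𝒜 h𝒜).proj_mem ρ b)
      rw [hc]
      exact Finset.sum_eq_zero fun ν _ => act_zero_c 𝒜 h𝒜 D _ ν _
  · rw [act_neg 𝒜 h𝒜 D h2, Esmul_zero_x]
    refine Finset.sum_eq_zero fun ρ _ => ?_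
    by_cases h1 : ρ.2.1 = τ.1
    · refine Finset.sum_eq_zero fun ν _ => ?_
      by_cases hν : ν = pairIdx τ ρ
      · subst hν
        refine act_neg 𝒜 h𝒜 D ?_ _ _
        rw [pairIdx_snd]
        exact h2
      · exact act_zero_of_proj 𝒜 h𝒜 D _
          ((ringDS 𝒜 h𝒜).proj_of_mem_ne (mul_proj_mem 𝒜 h𝒜 h1 a b) hν)
    · have hc : 𝒜.mul ((ringDS 𝒜 h𝒜).proj τ a) ((ringDS 𝒜 h𝒜).proj ρ b) = 0 :=
        h𝒜.mul_eq_zero τ.2.2 ρ.2.2 h1 ((ringDS 𝒜 h𝒜).proj_mem τ a)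
          ((ringDS 𝒜 h𝒜).proj_mem ρ b)
      rw [hc]
      exact Finset.sum_eq_zero fun ν _ => act_zero_c 𝒜 h𝒜 D σ ν _

end ESmul

end GrAux

namespace GrAux

section EData

open scoped Classical
set_option linter.unusedSectionVars false

variable {R : Type u} [AddCommGroup R]
  (𝒜 : GRingData Γ R) (h𝒜 : 𝒜.IsObjectUnital) (D : Type u) [AddCommGroup D]

/-- The graded module structure on `EC`. -/
noncomputable def EData : GModData Γ R (EC 𝒜 D) where
  smul := Esmul 𝒜 h𝒜 D
  component := fun {e f} σm => Econc 𝒜 D ⟨e, f, σm⟩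

include h𝒜

lemma EData_graded : (EData 𝒜 h𝒜 D).IsGraded 𝒜 := by
  constructor
  case add_smul => exact Esmul_add_x 𝒜 h𝒜 D
  case smul_add => exact Esmul_add_a 𝒜 h𝒜 D
  case smul_mul => exact Esmul_mul 𝒜 h𝒜 D
  case decompose =>
    intro x
    refine ⟨x.support, fun γ => DFinsupp.single γ (x γ),
      fun γ _ => single_mem_Econc 𝒜 h𝒜 D γ (x γ), ?_⟩
    exact (DFinsupp.sum_single (f := x)).symm
  case independent =>
    intro s cf hmem hsum γ hγ
    have e1 : ∑ δ ∈ s, cf δ = ∑ δ ∈ s, DFinsupp.single δ (cf δ δ) :=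
      Finset.sum_congr rfl fun δ hδ => eq_single_of_mem_Econc 𝒜 h𝒜 D (hmem δ hδ)
    have e2 : (∑ δ ∈ s, DFinsupp.single δ (cf δ δ)) γ = 0 := by
      rw [← e1, hsum]
      rfl
    rw [sum_single_apply 𝒜 h𝒜 D s (fun δ => cf δ δ) γ, if_pos hγ] at e2
    rw [eq_single_of_mem_Econc 𝒜 h𝒜 D (hmem γ hγ), e2]
    exact DFinsupp.single_zero γ
  case smul_mem =>
    intro e f g σm τm x a hx ha
    show Esmul 𝒜 h𝒜 D x a ∈ Econc 𝒜 D ⟨g, f, τm ≫ σm⟩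
    rw [Esmul_homog 𝒜 h𝒜 D (σ := ⟨e, f, σm⟩) (τ := ⟨g, e, τm⟩) hx ha, act_pos]
    exact single_mem_Econc 𝒜 h𝒜 D _ _
  case smul_eq_zero =>
    intro e f g h σm τm x a hne hx ha
    show Esmul 𝒜 h𝒜 D x a = 0
    rw [Esmul_homog 𝒜 h𝒜 D (σ := ⟨e, f, σm⟩) (τ := ⟨g, h, τm⟩) hx ha]
    exact act_neg 𝒜 h𝒜 D hne _ _
  case smul_one =>
    intro e f σm x hx
    show Esmul 𝒜 h𝒜 D x (𝒜.one e) = x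
    rw [Esmul_homog 𝒜 h𝒜 D (σ := ⟨e, f, σm⟩) (τ := ⟨e, e, 𝟙 e⟩) hx (h𝒜.one_mem e),
      act_pos]
    conv_rhs => rw [eq_single_of_mem_Econc 𝒜 h𝒜 D hx]
    refine single_congr 𝒜 h𝒜 D (by rw [Category.id_comp]) _ _ ?_
    ext b
    show (x ⟨e, f, σm⟩ : R →+ D) (𝒜.mul ((ringDS 𝒜 h𝒜).proj ⟨e, e, 𝟙 e⟩ (𝒜.one e)) b)
      = (x ⟨e, f, σm⟩ : R →+ D) b
    rw [(ringDS 𝒜 h𝒜).proj_of_mem (σ := ⟨e, e, 𝟙 e⟩) (h𝒜.one_mem e)]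
    exact FSub_one_mul 𝒜 h𝒜 D (x ⟨e, f, σm⟩).2 b

end EData

end GrAux

namespace GrAux

section Coext

open scoped Classical
set_option linter.unusedSectionVars false

variable {R : Type u} [AddCommGroup R] {M' : Type u} [AddCommGroup M']

/-- The module `M'` as a direct sum of its homogeneous components. -/
def modDS (𝒜 : GRingData Γ R) (ℳ : GModData Γ R M') (hℳ : ℳ.IsGraded 𝒜) : DirSum (fun γ : GrIdx Γ => ℳ.component γ.2.2) :=
  ⟨hℳ.decompose, hℳ.independent⟩

lemma smul_zero' (𝒜 : GRingData Γ R) (ℳ : GModData Γ R M') (hℳ : ℳ.IsGraded 𝒜) (m : M') : ℳ.smul m 0 = 0 := by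
  have h := hℳ.smul_add m 0 0
  rw [add_zero] at h
  exact (add_eq_left).mp h.symm

lemma zero_smul' (𝒜 : GRingData Γ R) (ℳ : GModData Γ R M') (hℳ : ℳ.IsGraded 𝒜) (a : R) : ℳ.smul 0 a = 0 := by
  have h := hℳ.add_smul 0 0 a
  rw [add_zero] at h
  exact (add_eq_left).mp h.symm

/-- `b ↦ m • b` as an additive map. -/
def smulHomL (𝒜 : GRingData Γ R) (ℳ : GModData Γ R M') (hℳ : ℳ.IsGraded 𝒜) (m : M') : R →+ M' :=
  AddMonoidHom.mk' (ℳ.smul m) (hℳ.smul_add m)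

/-- `m ↦ m • a` as an additive map. -/
def smulHomR (𝒜 : GRingData Γ R) (ℳ : GModData Γ R M') (hℳ : ℳ.IsGraded 𝒜) (a : R) : M' →+ M' :=
  AddMonoidHom.mk' (fun m => ℳ.smul m a) (fun m n => hℳ.add_smul m n a)

/-- The `σ`-component of the coextended map. -/
noncomputable def coFval (𝒜 : GRingData Γ R) {D : Type u} [AddCommGroup D]
    (ℳ : GModData Γ R M') (hℳ : ℳ.IsGraded 𝒜) (Ψ : M' →+ D) (σ : GrIdx Γ) (m : M') : R →+ D :=
  Ψ.comp (smulHomL 𝒜 ℳ hℳ ((modDS 𝒜 ℳ hℳ).proj σ m))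

lemma coF_mem (𝒜 : GRingData Γ R) (D : Type u) [AddCommGroup D]
    (ℳ : GModData Γ R M') (hℳ : ℳ.IsGraded 𝒜) (Ψ : M' →+ D) (σ : GrIdx Γ) (m : M') : coFval 𝒜 ℳ hℳ Ψ σ m ∈ FSub 𝒜 D σ.1 := by
  intro δ hδ b hb
  show Ψ (ℳ.smul ((modDS 𝒜 ℳ hℳ).proj σ m) b) = 0
  rw [hℳ.smul_eq_zero σ.2.2 δ.2.2 hδ ((modDS 𝒜 ℳ hℳ).proj_mem σ m) hb, Ψ.map_zero]

/-- Coextension of an additive map `Ψ : M' → D` to a gr-homomorphism `M' → EC`. -/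
noncomputable def coext (𝒜 : GRingData Γ R) (D : Type u) [AddCommGroup D]
    (ℳ : GModData Γ R M') (hℳ : ℳ.IsGraded 𝒜) (Ψ : M' →+ D) (m : M') : EC 𝒜 D :=
  ∑ σ ∈ (modDS 𝒜 ℳ hℳ).supp m,
    DFinsupp.single σ ⟨coFval 𝒜 ℳ hℳ Ψ σ m, coF_mem 𝒜 D ℳ hℳ Ψ σ m⟩

lemma coext_eq (𝒜 : GRingData Γ R) (D : Type u) [AddCommGroup D]
    (ℳ : GModData Γ R M') (hℳ : ℳ.IsGraded 𝒜) (Ψ : M' →+ D) {m : M'} {t : Finset (GrIdx Γ)} (ht : (modDS 𝒜 ℳ hℳ).supp m ⊆ t) :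
    coext 𝒜 D ℳ hℳ Ψ m
      = ∑ σ ∈ t, DFinsupp.single σ ⟨coFval 𝒜 ℳ hℳ Ψ σ m, coF_mem 𝒜 D ℳ hℳ Ψ σ m⟩ := by
  refine Finset.sum_subset ht fun σ _ hσ => ?_
  have hz : coFval 𝒜 ℳ hℳ Ψ σ m = 0 := by
    ext b
    show Ψ (ℳ.smul ((modDS 𝒜 ℳ hℳ).proj σ m) b) = 0
    rw [(modDS 𝒜 ℳ hℳ).proj_not_mem hσ, zero_smul' 𝒜 ℳ hℳ, Ψ.map_zero]
  simp only [hz]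
  exact DFinsupp.single_zero σ

lemma coext_add (𝒜 : GRingData Γ R) (D : Type u) [AddCommGroup D]
    (ℳ : GModData Γ R M') (hℳ : ℳ.IsGraded 𝒜) (Ψ : M' →+ D) (m n : M') :
    coext 𝒜 D ℳ hℳ Ψ (m + n) = coext 𝒜 D ℳ hℳ Ψ m + coext 𝒜 D ℳ hℳ Ψ n := by
  classical
  set t := (modDS 𝒜 ℳ hℳ).supp m ∪ (modDS 𝒜 ℳ hℳ).supp n ∪ (modDS 𝒜 ℳ hℳ).supp (m + n)
    with htdef
  rw [coext_eq 𝒜 D ℳ hℳ Ψ (t := t) (Finset.subset_union_right),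
    coext_eq 𝒜 D ℳ hℳ Ψ (t := t)
      ((Finset.subset_union_left).trans Finset.subset_union_left),
    coext_eq 𝒜 D ℳ hℳ Ψ (t := t)
      ((Finset.subset_union_right).trans Finset.subset_union_left),
    ← Finset.sum_add_distrib]
  refine Finset.sum_congr rfl fun σ _ => ?_
  rw [← DFinsupp.single_add]
  congr 1
  refine Subtype.ext ?_
  show coFval 𝒜 ℳ hℳ Ψ σ (m + n) = coFval 𝒜 ℳ hℳ Ψ σ m + coFval 𝒜 ℳ hℳ Ψ σ n
  ext b
  show Ψ (ℳ.smul ((modDS 𝒜 ℳ hℳ).proj σ (m + n)) b) = _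
  rw [(modDS 𝒜 ℳ hℳ).proj_add, hℳ.add_smul, Ψ.map_add]
  rfl

/-- `coext` bundled as an additive map. -/
noncomputable def coextHom (𝒜 : GRingData Γ R) (D : Type u) [AddCommGroup D]
    (ℳ : GModData Γ R M') (hℳ : ℳ.IsGraded 𝒜) (Ψ : M' →+ D) : M' →+ EC 𝒜 D :=
  AddMonoidHom.mk' (coext 𝒜 D ℳ hℳ Ψ) (coext_add 𝒜 D ℳ hℳ Ψ)

lemma coF_mem' (𝒜 : GRingData Γ R) (D : Type u) [AddCommGroup D]
    (ℳ : GModData Γ R M') (hℳ : ℳ.IsGraded 𝒜) (Ψ : M' →+ D) {ν : GrIdx Γ} {m : M'} (hm : m ∈ ℳ.component ν.2.2) :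
    Ψ.comp (smulHomL 𝒜 ℳ hℳ m) ∈ FSub 𝒜 D ν.1 := by
  intro δ hδ b hb
  show Ψ (ℳ.smul m b) = 0
  rw [hℳ.smul_eq_zero ν.2.2 δ.2.2 hδ hm hb, Ψ.map_zero]

lemma coext_homog (𝒜 : GRingData Γ R) (h𝒜 : 𝒜.IsObjectUnital) (D : Type u) [AddCommGroup D]
    (ℳ : GModData Γ R M') (hℳ : ℳ.IsGraded 𝒜) (Ψ : M' →+ D) {ν : GrIdx Γ} {m : M'} (hm : m ∈ ℳ.component ν.2.2) :
    coext 𝒜 D ℳ hℳ Ψ m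
      = DFinsupp.single ν ⟨Ψ.comp (smulHomL 𝒜 ℳ hℳ m), coF_mem' 𝒜 D ℳ hℳ Ψ hm⟩ := by
  rw [coext_eq 𝒜 D ℳ hℳ Ψ (t := insert ν ((modDS 𝒜 ℳ hℳ).supp m))
    (Finset.subset_insert _ _)]
  rw [Finset.sum_eq_single_of_mem ν (Finset.mem_insert_self _ _) fun σ _ hσ => ?_]
  · refine single_congr 𝒜 h𝒜 D rfl _ _ ?_
    show coFval 𝒜 ℳ hℳ Ψ ν m = Ψ.comp (smulHomL 𝒜 ℳ hℳ m)
    ext b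
    show Ψ (ℳ.smul ((modDS 𝒜 ℳ hℳ).proj ν m) b) = Ψ (ℳ.smul m b)
    rw [(modDS 𝒜 ℳ hℳ).proj_of_mem hm]
  · have hz : coFval 𝒜 ℳ hℳ Ψ σ m = 0 := by
      ext b
      show Ψ (ℳ.smul ((modDS 𝒜 ℳ hℳ).proj σ m) b) = 0
      rw [(modDS 𝒜 ℳ hℳ).proj_of_mem_ne hm hσ, zero_smul' 𝒜 ℳ hℳ, Ψ.map_zero]
    simp only [hz]
    exact DFinsupp.single_zero σ

lemma coext_smul_homog (𝒜 : GRingData Γ R) (h𝒜 : 𝒜.IsObjectUnital) (D : Type u) [AddCommGroup D]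
    (ℳ : GModData Γ R M') (hℳ : ℳ.IsGraded 𝒜) (Ψ : M' →+ D) {ν : GrIdx Γ} {m : M'} (hm : m ∈ ℳ.component ν.2.2) (a : R) :
    coext 𝒜 D ℳ hℳ Ψ (ℳ.smul m a) = Esmul 𝒜 h𝒜 D (coext 𝒜 D ℳ hℳ Ψ m) a := by
  obtain ⟨e, f, νm⟩ := ν
  rw [coext_homog 𝒜 h𝒜 D ℳ hℳ Ψ (ν := ⟨e, f, νm⟩) hm]
  rw [Esmul_single 𝒜 h𝒜 D _ _ a (T := (ringDS 𝒜 h𝒜).supp a) subset_rfl]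
  conv_lhs => rw [show ℳ.smul m a
      = ∑ τ ∈ (ringDS 𝒜 h𝒜).supp a, ℳ.smul m ((ringDS 𝒜 h𝒜).proj τ a) from by
    conv_lhs => rw [(ringDS 𝒜 h𝒜).sum_proj a]
    exact map_sum (smulHomL 𝒜 ℳ hℳ m) _ _]
  rw [show coext 𝒜 D ℳ hℳ Ψ (∑ τ ∈ (ringDS 𝒜 h𝒜).supp a,
        ℳ.smul m ((ringDS 𝒜 h𝒜).proj τ a))
      = ∑ τ ∈ (ringDS 𝒜 h𝒜).supp a,
        coext 𝒜 D ℳ hℳ Ψ (ℳ.smul m ((ringDS 𝒜 h𝒜).proj τ a))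
    from map_sum (coextHom 𝒜 D ℳ hℳ Ψ) _ _]
  refine Finset.sum_congr rfl fun τ hτ => ?_
  obtain ⟨g, h, τm⟩ := τ
  by_cases hcomp : h = e
  · subst hcomp
    rw [act_pos]
    have hsm : ℳ.smul m ((ringDS 𝒜 h𝒜).proj ⟨g, h, τm⟩ a)
        ∈ ℳ.component (τm ≫ νm) :=
      hℳ.smul_mem νm τm hm ((ringDS 𝒜 h𝒜).proj_mem ⟨g, h, τm⟩ a)
    rw [coext_homog 𝒜 h𝒜 D ℳ hℳ Ψ (ν := ⟨g, f, τm ≫ νm⟩) hsm]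
    refine single_congr 𝒜 h𝒜 D rfl _ _ ?_
    ext b
    show Ψ (ℳ.smul (ℳ.smul m ((ringDS 𝒜 h𝒜).proj ⟨g, h, τm⟩ a)) b)
      = Ψ (ℳ.smul m (𝒜.mul ((ringDS 𝒜 h𝒜).proj ⟨g, h, τm⟩ a) b))
    exact congrArg Ψ (hℳ.smul_mul m _ b).symm
  · rw [act_neg 𝒜 h𝒜 D hcomp]
    have hz : ℳ.smul m ((ringDS 𝒜 h𝒜).proj ⟨g, h, τm⟩ a) = 0 :=
      hℳ.smul_eq_zero νm τm hcomp hm ((ringDS 𝒜 h𝒜).proj_mem ⟨g, h, τm⟩ a)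
    rw [hz]
    exact map_zero (coextHom 𝒜 D ℳ hℳ Ψ)

lemma coext_smul (𝒜 : GRingData Γ R) (h𝒜 : 𝒜.IsObjectUnital) (D : Type u) [AddCommGroup D]
    (ℳ : GModData Γ R M') (hℳ : ℳ.IsGraded 𝒜) (Ψ : M' →+ D) (m : M') (a : R) :
    coext 𝒜 D ℳ hℳ Ψ (ℳ.smul m a) = Esmul 𝒜 h𝒜 D (coext 𝒜 D ℳ hℳ Ψ m) a := by
  conv_lhs => rw [(modDS 𝒜 ℳ hℳ).sum_proj m]
  conv_rhs => rw [(modDS 𝒜 ℳ hℳ).sum_proj m]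
  rw [show ℳ.smul (∑ ν ∈ (modDS 𝒜 ℳ hℳ).supp m, (modDS 𝒜 ℳ hℳ).proj ν m) a
      = ∑ ν ∈ (modDS 𝒜 ℳ hℳ).supp m, ℳ.smul ((modDS 𝒜 ℳ hℳ).proj ν m) a
    from map_sum (smulHomR 𝒜 ℳ hℳ a) _ _]
  rw [show coext 𝒜 D ℳ hℳ Ψ (∑ ν ∈ (modDS 𝒜 ℳ hℳ).supp m,
        ℳ.smul ((modDS 𝒜 ℳ hℳ).proj ν m) a)
      = ∑ ν ∈ (modDS 𝒜 ℳ hℳ).supp m,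
        coext 𝒜 D ℳ hℳ Ψ (ℳ.smul ((modDS 𝒜 ℳ hℳ).proj ν m) a)
    from map_sum (coextHom 𝒜 D ℳ hℳ Ψ) _ _]
  rw [show coext 𝒜 D ℳ hℳ Ψ (∑ ν ∈ (modDS 𝒜 ℳ hℳ).supp m, (modDS 𝒜 ℳ hℳ).proj ν m)
      = ∑ ν ∈ (modDS 𝒜 ℳ hℳ).supp m, coext 𝒜 D ℳ hℳ Ψ ((modDS 𝒜 ℳ hℳ).proj ν m)
    from map_sum (coextHom 𝒜 D ℳ hℳ Ψ) _ _]
  rw [Esmul_sum_x]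
  exact Finset.sum_congr rfl fun ν _ =>
    coext_smul_homog 𝒜 h𝒜 D ℳ hℳ Ψ ((modDS 𝒜 ℳ hℳ).proj_mem ν m) a

lemma coext_grhom (𝒜 : GRingData Γ R) (h𝒜 : 𝒜.IsObjectUnital) (D : Type u) [AddCommGroup D]
    (ℳ : GModData Γ R M') (hℳ : ℳ.IsGraded 𝒜) (Ψ : M' →+ D) :
    GModData.IsGrHom ℳ (EData 𝒜 h𝒜 D) (coext 𝒜 D ℳ hℳ Ψ) := by
  refine ⟨coext_add 𝒜 D ℳ hℳ Ψ, coext_smul 𝒜 h𝒜 D ℳ hℳ Ψ, ?_⟩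
  intro e f σm m hm
  show coext 𝒜 D ℳ hℳ Ψ m ∈ Econc 𝒜 D ⟨e, f, σm⟩
  rw [coext_homog 𝒜 h𝒜 D ℳ hℳ Ψ (ν := ⟨e, f, σm⟩) hm]
  exact single_mem_Econc 𝒜 h𝒜 D _ _

lemma coext_injective (𝒜 : GRingData Γ R) (h𝒜 : 𝒜.IsObjectUnital) (D : Type u) [AddCommGroup D]
    (ℳ : GModData Γ R M') (hℳ : ℳ.IsGraded 𝒜) (Ψ : M' →+ D) (hΨ : Function.Injective Ψ) :
    Function.Injective (coext 𝒜 D ℳ hℳ Ψ) := by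
  have hker : ∀ m : M', coext 𝒜 D ℳ hℳ Ψ m = 0 → m = 0 := by
    intro m h0
    have hproj : ∀ σ ∈ (modDS 𝒜 ℳ hℳ).supp m, (modDS 𝒜 ℳ hℳ).proj σ m = 0 := by
      intro σ hσ
      have e1 : (coext 𝒜 D ℳ hℳ Ψ m) σ = 0 := by rw [h0]; rfl
      unfold coext at e1
      rw [sum_single_apply 𝒜 h𝒜 D _ _ σ, if_pos hσ] at e1
      have e2 : coFval 𝒜 ℳ hℳ Ψ σ m = 0 := by
        have := Subtype.ext_iff.mp e1
        exact this
      have e3 : Ψ (ℳ.smul ((modDS 𝒜 ℳ hℳ).proj σ m) (𝒜.one σ.1)) = 0 :=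
        congrFun (congrArg (fun F => F.toFun) e2) (𝒜.one σ.1)
      rw [hℳ.smul_one σ.2.2 ((modDS 𝒜 ℳ hℳ).proj_mem σ m)] at e3
      exact hΨ (by rw [e3, Ψ.map_zero])
    have := (modDS 𝒜 ℳ hℳ).sum_proj m
    rw [Finset.sum_congr rfl hproj, Finset.sum_const_zero] at this
    exact this
  intro m n hmn
  have : coext 𝒜 D ℳ hℳ Ψ (m - n) = 0 := by
    rw [show coext 𝒜 D ℳ hℳ Ψ (m - n)
        = coext 𝒜 D ℳ hℳ Ψ m - coext 𝒜 D ℳ hℳ Ψ n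
      from map_sub (coextHom 𝒜 D ℳ hℳ Ψ) m n, hmn, sub_self]
  have := hker _ this
  exact sub_eq_zero.mp this

end Coext

section Ev

open scoped Classical
set_option linter.unusedSectionVars false

variable {R : Type u} [AddCommGroup R]
  (𝒜 : GRingData Γ R) (h𝒜 : 𝒜.IsObjectUnital) (D : Type u) [AddCommGroup D]

/-- Evaluation at the local unit. -/
def evAt (γ : GrIdx Γ) : ↥(FSub 𝒜 D γ.1) →+ D where
  toFun := fun F => (F : R →+ D) (𝒜.one γ.1)
  map_zero' := rfl
  map_add' := fun F G => rfl

/-- The counit `EC → D`. -/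
noncomputable def evE : EC 𝒜 D →+ D := DFinsupp.sumAddHom (evAt 𝒜 D)

lemma evE_single (γ : GrIdx Γ) (v : ↥(FSub 𝒜 D γ.1)) :
    evE 𝒜 D (DFinsupp.single γ v) = (v : R →+ D) (𝒜.one γ.1) :=
  DFinsupp.sumAddHom_single _ _ _

include h𝒜 in
lemma evE_Esmul_single (ν : GrIdx Γ) (v : ↥(FSub 𝒜 D ν.1)) (b : R) :
    evE 𝒜 D (Esmul 𝒜 h𝒜 D (DFinsupp.single ν v) b) = (v : R →+ D) b := by
  rw [Esmul_single 𝒜 h𝒜 D ν v b (T := (ringDS 𝒜 h𝒜).supp b) subset_rfl, map_sum]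
  have key : ∀ τ ∈ (ringDS 𝒜 h𝒜).supp b,
      evE 𝒜 D (act 𝒜 h𝒜 D ν τ ↑v b) = (v : R →+ D) ((ringDS 𝒜 h𝒜).proj τ b) := by
    intro τ _
    by_cases hco : τ.2.1 = ν.1
    · obtain ⟨e, f, νm⟩ := ν
      obtain ⟨g, h', τm⟩ := τ
      have hco' : h' = e := hco
      subst hco'
      rw [act_pos, evE_single]
      show (v : R →+ D) (𝒜.mul ((ringDS 𝒜 h𝒜).proj ⟨g, h', τm⟩ b) (𝒜.one g)) = _
      exact congrArg _ (h𝒜.mul_one τm ((ringDS 𝒜 h𝒜).proj_mem ⟨g, h', τm⟩ b))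
    · rw [act_neg 𝒜 h𝒜 D hco, map_zero]
      exact (v.2 τ hco _ ((ringDS 𝒜 h𝒜).proj_mem τ b)).symm
  rw [Finset.sum_congr rfl key, ← map_sum, ← (ringDS 𝒜 h𝒜).sum_proj b]

end Ev

end GrAux
/-- Let `R` be a `Γ`-graded ring and `M` a `Γ`-graded right
`R`-module. Then there exist a gr-injective `Γ`-graded right `R`-module `E` and
an injective gr-homomorphism `M → E`. -/
theorem exists_grInjective_embedding
    {Γ : Type u} [Groupoid.{u} Γ] {R : Type u} [AddCommGroup R] {M : Type u}
    [AddCommGroup M] (𝒜 : GRingData Γ R) (h𝒜 : 𝒜.IsObjectUnital)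
    (ℳ : GModData Γ R M) (hℳ : ℳ.IsGraded 𝒜) :
    ∃ ℰ : GrModule Γ 𝒜, GrInjective 𝒜 ℰ.data ∧
      ∃ g : M → ℰ.carrier, GModData.IsGrHom ℳ ℰ.data g ∧ Function.Injective g := by
  classical
  let D : Type u := ↥(Dgrp M)
  letI instD : AddCommGroup D := inferInstanceAs (AddCommGroup ↥(Dgrp M))
  letI instDI : CategoryTheory.Injective (AddCommGrpCat.of D) := DgrpInj M
  refine ⟨⟨GrAux.EC 𝒜 D, GrAux.EData 𝒜 h𝒜 D, GrAux.EData_graded 𝒜 h𝒜 D⟩, ?_, ?_⟩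
  · -- gr-injectivity
    intro M' N' _ _ ℳ' 𝒩 hℳ' h𝒩 g hg hginj h hh
    set gH : N' →+ M' := AddMonoidHom.mk' g hg.1 with hgH
    set hH : N' →+ GrAux.EC 𝒜 D := AddMonoidHom.mk' h hh.1 with hhH
    obtain ⟨H, hHk⟩ := abelian_extension gH hginj ((GrAux.evE 𝒜 D).comp hH)
    refine ⟨GrAux.coext 𝒜 D ℳ' hℳ' H,
      GrAux.coext_grhom 𝒜 h𝒜 D ℳ' hℳ' H, ?_⟩
    have main : ∀ (ν : GrIdx Γ) (n : N'), n ∈ 𝒩.component ν.2.2 →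
        GrAux.coext 𝒜 D ℳ' hℳ' H (g n) = h n := by
      intro ν n hn
      obtain ⟨e, f, νm⟩ := ν
      have hgn : g n ∈ ℳ'.component νm := hg.2.2 e f νm n hn
      rw [GrAux.coext_homog 𝒜 h𝒜 D ℳ' hℳ' H (ν := ⟨e, f, νm⟩) hgn]
      have hhn : h n ∈ GrAux.Econc 𝒜 D ⟨e, f, νm⟩ := hh.2.2 e f νm n hn
      conv_rhs => rw [GrAux.eq_single_of_mem_Econc 𝒜 h𝒜 D hhn]
      refine GrAux.single_congr 𝒜 h𝒜 D rfl _ _ ?_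
      ext b
      show H (ℳ'.smul (g n) b) = (h n ⟨e, f, νm⟩ : R →+ D) b
      rw [← hg.2.1 n b]
      rw [show H (g (𝒩.smul n b)) = GrAux.evE 𝒜 D (h (𝒩.smul n b)) from hHk _]
      rw [show h (𝒩.smul n b) = GrAux.Esmul 𝒜 h𝒜 D (h n) b from hh.2.1 n b]
      conv_lhs => rw [GrAux.eq_single_of_mem_Econc 𝒜 h𝒜 D hhn]
      exact GrAux.evE_Esmul_single 𝒜 h𝒜 D ⟨e, f, νm⟩ _ b
    intro y
    have hy := (GrAux.modDS 𝒜 𝒩 h𝒩).sum_proj y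
    calc GrAux.coext 𝒜 D ℳ' hℳ' H (g y)
        = GrAux.coext 𝒜 D ℳ' hℳ' H (g (∑ ν ∈ (GrAux.modDS 𝒜 𝒩 h𝒩).supp y,
            (GrAux.modDS 𝒜 𝒩 h𝒩).proj ν y)) := by rw [← hy]
      _ = GrAux.coext 𝒜 D ℳ' hℳ' H (∑ ν ∈ (GrAux.modDS 𝒜 𝒩 h𝒩).supp y,
            g ((GrAux.modDS 𝒜 𝒩 h𝒩).proj ν y)) :=
          congrArg (GrAux.coext 𝒜 D ℳ' hℳ' H) (map_sum gH _ _)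
      _ = ∑ ν ∈ (GrAux.modDS 𝒜 𝒩 h𝒩).supp y,
            GrAux.coext 𝒜 D ℳ' hℳ' H (g ((GrAux.modDS 𝒜 𝒩 h𝒩).proj ν y)) :=
          map_sum (GrAux.coextHom 𝒜 D ℳ' hℳ' H) _ _
      _ = ∑ ν ∈ (GrAux.modDS 𝒜 𝒩 h𝒩).supp y, h ((GrAux.modDS 𝒜 𝒩 h𝒩).proj ν y) :=
          Finset.sum_congr rfl fun ν _ =>
            main ν _ ((GrAux.modDS 𝒜 𝒩 h𝒩).proj_mem ν y)
      _ = h (∑ ν ∈ (GrAux.modDS 𝒜 𝒩 h𝒩).supp y, (GrAux.modDS 𝒜 𝒩 h𝒩).proj ν y) :=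
          (map_sum hH _ _).symm
      _ = h y := by rw [← hy]
  · -- embedding
    exact ⟨GrAux.coext 𝒜 D ℳ hℳ (iotaM M),
      GrAux.coext_grhom 𝒜 h𝒜 D ℳ hℳ (iotaM M),
      GrAux.coext_injective 𝒜 h𝒜 D ℳ hℳ (iotaM M) (iotaM_injective M)⟩
end

section
/- Let R be a Γ-graded ring and M a Γ-graded right R-module. Then: (1) rad^gr(M) equals the sum of all gr-superfluous graded submodules of M; (2) soc_gr(M) equals the intersection of all gr-essential graded submodules of M. -/
open CategoryTheory

universe u

variable {Γ : Type u} [Groupoid.{u} Γ]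

namespace Statement12

open GModData

variable {Γ : Type u} [Groupoid.{u} Γ] {R : Type u} [AddCommGroup R] {M : Type u}
  [AddCommGroup M] {𝒜 : GRingData Γ R} {ℳ : GModData Γ R M}

lemma smul_zero_left (hℳ : ℳ.IsGraded 𝒜) (a : R) : ℳ.smul 0 a = 0 := by
  have h := hℳ.add_smul 0 0 a
  rw [add_zero] at h
  exact add_eq_right.mp h.symm

lemma smul_neg_left (hℳ : ℳ.IsGraded 𝒜) (m : M) (a : R) :
    ℳ.smul (-m) a = -ℳ.smul m a := by
  have h := hℳ.add_smul (-m) m a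
  rw [neg_add_cancel, smul_zero_left hℳ] at h
  exact eq_neg_of_add_eq_zero_left h.symm

lemma smul_zero_right (hℳ : ℳ.IsGraded 𝒜) (m : M) : ℳ.smul m 0 = 0 := by
  have h := hℳ.smul_add m 0 0
  rw [add_zero] at h
  exact add_eq_right.mp h.symm

lemma smul_sum (hℳ : ℳ.IsGraded 𝒜) {ι : Type*} (m : M) (s : Finset ι) (f : ι → R) :
    ℳ.smul m (∑ i ∈ s, f i) = ∑ i ∈ s, ℳ.smul m (f i) := by
  classical
  induction s using Finset.induction_on with
  | empty => simpa using smul_zero_right hℳ m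
  | insert _ _ ha ih => rw [Finset.sum_insert ha, Finset.sum_insert ha, hℳ.smul_add, ih]

open scoped Classical in
lemma uniq (hℳ : ℳ.IsGraded 𝒜) {s t : Finset (GrIdx Γ)} {cf cg : GrIdx Γ → M}
    (hf : ∀ γ ∈ s, cf γ ∈ ℳ.component γ.2.2) (hg : ∀ γ ∈ t, cg γ ∈ ℳ.component γ.2.2)
    (h : ∑ γ ∈ s, cf γ = ∑ γ ∈ t, cg γ) (γ : GrIdx Γ) (hγ : γ ∈ s) :
    cf γ = if γ ∈ t then cg γ else 0 := by
  classical
  have hmem' : ∀ δ ∈ s ∪ t,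
      ((if δ ∈ s then cf δ else 0) - (if δ ∈ t then cg δ else 0)) ∈ ℳ.component δ.2.2 := by
    intro δ _
    refine sub_mem ?_ ?_
    · split_ifs with hh
      · exact hf δ hh
      · exact zero_mem _
    · split_ifs with hh
      · exact hg δ hh
      · exact zero_mem _
  have hsum0 : ∑ δ ∈ s ∪ t,
      ((if δ ∈ s then cf δ else 0) - (if δ ∈ t then cg δ else 0)) = 0 := by
    rw [Finset.sum_sub_distrib, Finset.sum_ite_mem, Finset.sum_ite_mem,
      Finset.union_inter_cancel_left, Finset.union_inter_cancel_right, h, sub_self]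
  have key := hℳ.independent (s ∪ t) _ hmem' hsum0 γ (Finset.mem_union_left _ hγ)
  rw [if_pos hγ, sub_eq_zero] at key
  exact key

lemma mem_closure_decomp (hℳ : ℳ.IsGraded 𝒜) {N : AddSubgroup M} {n : M}
    (hn : n ∈ AddSubgroup.closure {x : M | x ∈ N ∧ ℳ.IsHomogeneous x}) :
    ∃ (s : Finset (GrIdx Γ)) (cf : GrIdx Γ → M),
      (∀ γ ∈ s, cf γ ∈ ℳ.component γ.2.2 ∧ cf γ ∈ N) ∧ n = ∑ γ ∈ s, cf γ := by
  classical
  induction hn using AddSubgroup.closure_induction with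
  | mem x hx =>
    obtain ⟨hxN, e, f, σ, hσ⟩ := hx
    refine ⟨{⟨e, f, σ⟩}, fun _ => x, ?_, by simp⟩
    intro γ hγ
    rw [Finset.mem_singleton] at hγ
    subst hγ
    exact ⟨hσ, hxN⟩
  | zero => exact ⟨∅, fun _ => 0, by simp, by simp⟩
  | add x y hx hy ihx ihy =>
    obtain ⟨s, cf, hf, hxe⟩ := ihx
    obtain ⟨t, cg, hg, hye⟩ := ihy
    refine ⟨s ∪ t, fun γ => (if γ ∈ s then cf γ else 0) + (if γ ∈ t then cg γ else 0),
      ?_, ?_⟩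
    · intro γ _
      constructor
      · refine add_mem ?_ ?_
        · split_ifs with hh
          · exact (hf γ hh).1
          · exact zero_mem _
        · split_ifs with hh
          · exact (hg γ hh).1
          · exact zero_mem _
      · refine add_mem ?_ ?_
        · split_ifs with hh
          · exact (hf γ hh).2
          · exact zero_mem _
        · split_ifs with hh
          · exact (hg γ hh).2
          · exact zero_mem _
    · rw [Finset.sum_add_distrib, Finset.sum_ite_mem, Finset.sum_ite_mem,
        Finset.union_inter_cancel_left, Finset.union_inter_cancel_right, hxe, hye]
  | neg x hx ih =>
    obtain ⟨s, cf, hf, hxe⟩ := ih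
    exact ⟨s, fun γ => -cf γ, fun γ hγ => ⟨neg_mem (hf γ hγ).1, neg_mem (hf γ hγ).2⟩,
      by rw [hxe, ← Finset.sum_neg_distrib]⟩

lemma decomp (hℳ : ℳ.IsGraded 𝒜) (n : M) :
    ∃ (s : Finset (GrIdx Γ)) (cf : GrIdx Γ → M),
      (∀ γ ∈ s, cf γ ∈ ℳ.component γ.2.2) ∧ n = ∑ γ ∈ s, cf γ ∧
      ∀ N : AddSubgroup M, ℳ.IsGrSub N → n ∈ N → ∀ γ ∈ s, cf γ ∈ N := by
  classical
  obtain ⟨s, cf, hf, hsum⟩ := hℳ.decompose n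
  refine ⟨s, cf, hf, hsum, ?_⟩
  intro N hN hnN γ hγ
  obtain ⟨t, cg, hg, htsum⟩ := mem_closure_decomp hℳ (hN.2 n hnN)
  have hkey := uniq hℳ hf (fun δ hδ => (hg δ hδ).1) (hsum.symm.trans htsum) γ hγ
  rw [hkey]
  split_ifs with hh
  · exact (hg γ hh).2
  · exact zero_mem _

lemma exists_homog (hℳ : ℳ.IsGraded 𝒜) {N : AddSubgroup M} (hN : ℳ.IsGrSub N)
    (hne : N ≠ ⊥) : ∃ x, x ∈ N ∧ x ≠ 0 ∧ ℳ.IsHomogeneous x := by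
  obtain ⟨n, hnN, hn0⟩ : ∃ n ∈ N, n ≠ 0 := by
    by_contra hc
    push_neg at hc
    exact hne ((AddSubgroup.eq_bot_iff_forall N).mpr hc)
  obtain ⟨s, cf, hf, hsum, hmem⟩ := decomp hℳ n
  by_cases hall : ∀ γ ∈ s, cf γ = 0
  · exact absurd (hsum.trans (Finset.sum_eq_zero hall)) hn0
  · push_neg at hall
    obtain ⟨γ, hγ, hcf⟩ := hall
    exact ⟨cf γ, hmem N hN hnN γ hγ, hcf, γ.1, γ.2.1, γ.2.2, hf γ hγ⟩

/-- The preimage subgroup `{m | ∀ a, m a ∈ X}`. -/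
def smulInv (hℳ : ℳ.IsGraded 𝒜) (X : AddSubgroup M) : AddSubgroup M where
  carrier := {m | ∀ a : R, ℳ.smul m a ∈ X}
  zero_mem' := fun a => by rw [smul_zero_left hℳ]; exact X.zero_mem
  add_mem' := fun {m n} hm hn a => by rw [hℳ.add_smul]; exact X.add_mem (hm a) (hn a)
  neg_mem' := fun {m} hm a => by rw [smul_neg_left hℳ]; exact X.neg_mem (hm a)

lemma mem_smulInv {hℳ : ℳ.IsGraded 𝒜} {X : AddSubgroup M} {m : M} :
    m ∈ smulInv hℳ X ↔ ∀ a : R, ℳ.smul m a ∈ X := Iff.rfl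

lemma isGrSub_bot (hℳ : ℳ.IsGraded 𝒜) : ℳ.IsGrSub (⊥ : AddSubgroup M) := by
  constructor
  · intro m hm a
    rw [AddSubgroup.mem_bot] at hm ⊢
    rw [hm, smul_zero_left hℳ]
  · intro n hn
    rw [AddSubgroup.mem_bot] at hn
    rw [hn]
    exact zero_mem _

lemma isGrSub_sInf (hℳ : ℳ.IsGraded 𝒜) {S : Set (AddSubgroup M)}
    (hS : ∀ N ∈ S, ℳ.IsGrSub N) : ℳ.IsGrSub (sInf S) := by
  constructor
  · intro m hm a
    rw [AddSubgroup.mem_sInf] at hm ⊢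
    exact fun N hN => (hS N hN).1 m (hm N hN) a
  · intro n hn
    obtain ⟨s, cf, hf, hsum, hmem⟩ := decomp hℳ n
    rw [hsum]
    refine sum_mem fun γ hγ => AddSubgroup.subset_closure ⟨?_, γ.1, γ.2.1, γ.2.2, hf γ hγ⟩
    rw [AddSubgroup.mem_sInf]
    exact fun N hN => hmem N (hS N hN) (AddSubgroup.mem_sInf.mp hn N hN) γ hγ

lemma isGrSub_sSup (hℳ : ℳ.IsGraded 𝒜) {S : Set (AddSubgroup M)}
    (hS : ∀ N ∈ S, ℳ.IsGrSub N) : ℳ.IsGrSub (sSup S) := by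
  constructor
  · intro m hm a
    have hle : sSup S ≤ smulInv hℳ (sSup S) := by
      apply sSup_le
      intro N hN
      rw [SetLike.le_def]
      intro x hx
      rw [mem_smulInv]
      intro b
      exact le_sSup hN ((hS N hN).1 x hx b)
    exact hle hm a
  · intro n hn
    have hle : sSup S ≤ AddSubgroup.closure {x : M | x ∈ sSup S ∧ ℳ.IsHomogeneous x} := by
      apply sSup_le
      intro N hN
      rw [SetLike.le_def]
      intro x hx
      refine AddSubgroup.closure_mono ?_ ((hS N hN).2 x hx)
      intro y hy
      exact ⟨le_sSup hN hy.1, hy.2⟩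
    exact hle hn

lemma isGrSub_sup (hℳ : ℳ.IsGraded 𝒜) {N P : AddSubgroup M} (hN : ℳ.IsGrSub N)
    (hP : ℳ.IsGrSub P) : ℳ.IsGrSub (N ⊔ P) := by
  rw [← sSup_pair]
  exact isGrSub_sSup hℳ (by rintro X (rfl | rfl) <;> assumption)

lemma isGrSub_inf (hℳ : ℳ.IsGraded 𝒜) {N P : AddSubgroup M} (hN : ℳ.IsGrSub N)
    (hP : ℳ.IsGrSub P) : ℳ.IsGrSub (N ⊓ P) := by
  rw [← sInf_pair]
  exact isGrSub_sInf hℳ (by rintro X (rfl | rfl) <;> assumption)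

/-- The cyclic graded submodule generated by `x`. -/
def cyc (ℳ : GModData Γ R M) (x : M) : AddSubgroup M :=
  AddSubgroup.closure ({x} ∪ {y | ∃ a : R, y = ℳ.smul x a})

lemma mem_cyc (ℳ : GModData Γ R M) (x : M) : x ∈ cyc ℳ x :=
  AddSubgroup.subset_closure (Or.inl rfl)

lemma cyc_le {x : M} {N : AddSubgroup M} (hxN : x ∈ N)
    (hsmul : ∀ m ∈ N, ∀ a : R, ℳ.smul m a ∈ N) : cyc ℳ x ≤ N := by
  refine (AddSubgroup.closure_le _).mpr ?_
  rintro y (rfl | ⟨a, rfl⟩)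
  · exact hxN
  · exact hsmul x hxN a

lemma cyc_smul (hℳ : ℳ.IsGraded 𝒜) (x : M) :
    ∀ m ∈ cyc ℳ x, ∀ a : R, ℳ.smul m a ∈ cyc ℳ x := by
  intro m hm a
  have hle : cyc ℳ x ≤ smulInv hℳ (cyc ℳ x) := by
    refine (AddSubgroup.closure_le _).mpr ?_
    rintro y (rfl | ⟨b, rfl⟩) <;> refine mem_smulInv.mpr fun c => ?_
    · exact AddSubgroup.subset_closure (Or.inr ⟨c, rfl⟩)
    · rw [← hℳ.smul_mul]
      exact AddSubgroup.subset_closure (Or.inr ⟨𝒜.mul b c, rfl⟩)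
  exact hle hm a

lemma isGrSub_cyc (h𝒜 : 𝒜.IsObjectUnital) (hℳ : ℳ.IsGraded 𝒜) {e f : Γ} {σ : e ⟶ f}
    {x : M} (hx : x ∈ ℳ.component σ) : ℳ.IsGrSub (cyc ℳ x) := by
  classical
  refine ⟨cyc_smul hℳ x, ?_⟩
  intro n hn
  have hle : cyc ℳ x ≤ AddSubgroup.closure {z : M | z ∈ cyc ℳ x ∧ ℳ.IsHomogeneous z} := by
    refine (AddSubgroup.closure_le _).mpr ?_
    rintro y (rfl | ⟨a, rfl⟩)
    · exact AddSubgroup.subset_closure ⟨mem_cyc ℳ y, e, f, σ, hx⟩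
    · obtain ⟨s, cf, hf, hsum⟩ := h𝒜.decompose a
      rw [hsum, smul_sum hℳ]
      refine sum_mem fun τ hτ => ?_
      obtain ⟨g, h, δ⟩ := τ
      by_cases hcase : h = e
      · subst hcase
        exact AddSubgroup.subset_closure
          ⟨AddSubgroup.subset_closure (Or.inr ⟨cf ⟨g, h, δ⟩, rfl⟩), g, f, δ ≫ σ,
            hℳ.smul_mem σ δ hx (hf _ hτ)⟩
      · rw [hℳ.smul_eq_zero σ δ hcase hx (hf _ hτ)]
        exact zero_mem _
  exact hle hn

lemma cyc_superfluous (h𝒜 : 𝒜.IsObjectUnital) (hℳ : ℳ.IsGraded 𝒜) {e f : Γ}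
    {σ : e ⟶ f} {x : M} (hx : x ∈ ℳ.component σ) (hrad : x ∈ ℳ.grRad) :
    ℳ.GrSuperfluous (cyc ℳ x) := by
  intro X hXg hsup
  by_contra hXne
  have hxX : x ∉ X := by
    intro hmem
    rw [sup_eq_right.mpr (cyc_le hmem hXg.1)] at hsup
    exact hXne hsup
  have hchain : ∀ c ⊆ {L : AddSubgroup M | ℳ.IsGrSub L ∧ X ≤ L ∧ x ∉ L},
      IsChain (· ≤ ·) c → ∀ y ∈ c,
      ∃ ub ∈ {L : AddSubgroup M | ℳ.IsGrSub L ∧ X ≤ L ∧ x ∉ L}, ∀ z ∈ c, z ≤ ub := by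
    intro c hcs hchain y hy
    refine ⟨sSup c, ⟨isGrSub_sSup hℳ fun N hN => (hcs hN).1,
      le_trans (hcs hy).2.1 (le_sSup hy), ?_⟩, fun z hz => le_sSup hz⟩
    intro hmem
    obtain ⟨N, hNc, hxN⟩ :=
      (AddSubgroup.mem_sSup_of_directedOn ⟨y, hy⟩ hchain.directedOn).mp hmem
    exact (hcs hNc).2.2 hxN
  obtain ⟨P, hXP, hPmax⟩ := zorn_le_nonempty₀
    {L : AddSubgroup M | ℳ.IsGrSub L ∧ X ≤ L ∧ x ∉ L} hchain X ⟨hXg, le_rfl, hxX⟩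
  have hPtop : P ≠ ⊤ := fun htop => hPmax.1.2.2 (htop ▸ AddSubgroup.mem_top x)
  have hPmaxsub : ℳ.IsGrMaximalSub P := by
    refine ⟨hPmax.1.1, hPtop, ?_⟩
    intro Q hQg hPQ
    by_cases hxQ : x ∈ Q
    · right
      rw [eq_top_iff, ← hsup]
      exact sup_le (cyc_le hxQ hQg.1) (le_trans hPmax.1.2.1 hPQ)
    · left
      exact le_antisymm (hPmax.2 ⟨hQg, le_trans hPmax.1.2.1 hPQ, hxQ⟩ hPQ) hPQ
  simp only [GModData.grRad, AddSubgroup.mem_sInf] at hrad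
  exact hPmax.1.2.2 (hrad P hPmaxsub)

lemma exists_complement (hℳ : ℳ.IsGraded 𝒜) {K : AddSubgroup M} (hK : ℳ.IsGrSub K) :
    ∃ C, ℳ.IsGrSub C ∧ K ⊓ C = ⊥ ∧ ℳ.GrEssential (K ⊔ C) := by
  have hchain : ∀ c ⊆ {C : AddSubgroup M | ℳ.IsGrSub C ∧ K ⊓ C = ⊥},
      IsChain (· ≤ ·) c → ∀ y ∈ c,
      ∃ ub ∈ {C : AddSubgroup M | ℳ.IsGrSub C ∧ K ⊓ C = ⊥}, ∀ z ∈ c, z ≤ ub := by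
    intro c hcs hchain y hy
    refine ⟨sSup c, ⟨isGrSub_sSup hℳ fun N hN => (hcs hN).1, ?_⟩, fun z hz => le_sSup hz⟩
    rw [eq_bot_iff]
    intro z hz
    rw [AddSubgroup.mem_inf] at hz
    obtain ⟨N, hNc, hzN⟩ :=
      (AddSubgroup.mem_sSup_of_directedOn ⟨y, hy⟩ hchain.directedOn).mp hz.2
    have hz' : z ∈ K ⊓ N := AddSubgroup.mem_inf.mpr ⟨hz.1, hzN⟩
    rw [(hcs hNc).2] at hz'
    exact hz'
  obtain ⟨C, -, hCmax⟩ := zorn_le_nonempty₀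
    {C : AddSubgroup M | ℳ.IsGrSub C ∧ K ⊓ C = ⊥} hchain ⊥ ⟨isGrSub_bot hℳ, inf_bot_eq K⟩
  refine ⟨C, hCmax.1.1, hCmax.1.2, ?_⟩
  intro X hXg hint
  by_contra hXne
  have hXnC : ¬X ≤ C := by
    intro hle
    apply hXne
    rw [eq_bot_iff, ← hint]
    exact le_inf (le_trans hle le_sup_right) le_rfl
  apply hXnC
  have hmem : C ⊔ X ∈ {C : AddSubgroup M | ℳ.IsGrSub C ∧ K ⊓ C = ⊥} := by
    refine ⟨isGrSub_sup hℳ hCmax.1.1 hXg, ?_⟩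
    rw [eq_bot_iff]
    intro z hz
    rw [AddSubgroup.mem_inf] at hz
    obtain ⟨hzK, hzCX⟩ := hz
    obtain ⟨cc, hcc, yy, hyy, rfl⟩ := AddSubgroup.mem_sup.mp hzCX
    have h1 : cc + yy ∈ K ⊔ C := (le_sup_left : K ≤ K ⊔ C) hzK
    have h2 : cc ∈ K ⊔ C := (le_sup_right : C ≤ K ⊔ C) hcc
    have h3 : yy ∈ (K ⊔ C) ⊓ X := by
      refine AddSubgroup.mem_inf.mpr ⟨?_, hyy⟩
      simpa using (K ⊔ C).sub_mem h1 h2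
    rw [hint] at h3
    have hyy0 : yy = 0 := by simpa using h3
    have hz' : cc + yy ∈ K ⊓ C :=
      AddSubgroup.mem_inf.mpr ⟨hzK, by rw [hyy0, add_zero]; exact hcc⟩
    rw [hCmax.1.2] at hz'
    exact hz'
  exact le_trans le_sup_right (hCmax.2 hmem le_sup_left)

end Statement12

/-- Let `R` be a `Γ`-graded ring and `M` a `Γ`-graded right
`R`-module. Then (1) `rad^gr(M)` is the sum of all gr-superfluous graded
submodules of `M`; (2) `soc_gr(M)` is the intersection of all gr-essential
graded submodules of `M`. -/
theorem grRad_eq_sSup_superfluous_and_grSoc_eq_sInf_essential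
    {Γ : Type u} [Groupoid.{u} Γ] {R : Type u} [AddCommGroup R] {M : Type u}
    [AddCommGroup M] (𝒜 : GRingData Γ R) (h𝒜 : 𝒜.IsObjectUnital)
    (ℳ : GModData Γ R M) (hℳ : ℳ.IsGraded 𝒜) :
    ℳ.grRad = sSup {N : AddSubgroup M | ℳ.IsGrSub N ∧ ℳ.GrSuperfluous N} ∧
    ℳ.grSoc = sInf {N : AddSubgroup M | ℳ.IsGrSub N ∧ ℳ.GrEssential N} := by
  classical
  constructor
  · -- the radical
    apply le_antisymm
    · -- grRad ≤ sSup of superfluous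
      rw [SetLike.le_def]
      intro n hn
      obtain ⟨s, cf, hf, hsum, hmem⟩ := Statement12.decomp hℳ n
      have hradg : ℳ.IsGrSub ℳ.grRad := by
        rw [GModData.grRad]
        exact Statement12.isGrSub_sInf hℳ fun N hN => hN.1
      rw [hsum]
      refine sum_mem fun γ hγ => ?_
      have hcfγ : cf γ ∈ ℳ.grRad := hmem _ hradg hn γ hγ
      exact le_sSup
        (show _ ∈ {N : AddSubgroup M | ℳ.IsGrSub N ∧ ℳ.GrSuperfluous N} from
          ⟨Statement12.isGrSub_cyc h𝒜 hℳ (hf γ hγ),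
            Statement12.cyc_superfluous h𝒜 hℳ (hf γ hγ) hcfγ⟩)
        (Statement12.mem_cyc ℳ (cf γ))
    · -- sSup of superfluous ≤ grRad
      rw [GModData.grRad]
      apply sSup_le
      rintro N ⟨hNg, hNsf⟩
      apply le_sInf
      rintro P ⟨hPg, hPne, hPmax⟩
      rcases hPmax (N ⊔ P) (Statement12.isGrSub_sup hℳ hNg hPg) le_sup_right with h | h
      · exact h ▸ le_sup_left
      · exact absurd (hNsf P hPg h) hPne
  · -- the socle
    apply le_antisymm
    · -- grSoc ≤ sInf of essential
      rw [GModData.grSoc]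
      apply sSup_le
      rintro S ⟨hSg, hSne, hSsimp⟩
      apply le_sInf
      rintro E ⟨hEg, hEess⟩
      rcases hSsimp (S ⊓ E) (Statement12.isGrSub_inf hℳ hSg hEg) inf_le_left with h | h
      · exact absurd (hEess S hSg (by rw [inf_comm] at h; exact h)) hSne
      · exact h ▸ inf_le_right
    · -- sInf of essential ≤ grSoc
      set L := sInf {N : AddSubgroup M | ℳ.IsGrSub N ∧ ℳ.GrEssential N} with hLdef
      have hLg : ℳ.IsGrSub L := Statement12.isGrSub_sInf hℳ fun N hN => hN.1
      have summand : ∀ N : AddSubgroup M, ℳ.IsGrSub N → N ≤ L →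
          ∃ D, ℳ.IsGrSub D ∧ N ⊓ D = ⊥ ∧ N ⊔ D = L ∧ D ≤ L := by
        intro N hNg hNL
        obtain ⟨C, hCg, hNC, hess⟩ := Statement12.exists_complement hℳ hNg
        refine ⟨C ⊓ L, Statement12.isGrSub_inf hℳ hCg hLg, ?_, ?_, inf_le_right⟩
        · rw [eq_bot_iff, ← hNC]
          exact le_inf inf_le_left (le_trans inf_le_right inf_le_left)
        · have hLsub : L ≤ N ⊔ C := by
            rw [hLdef]
            exact sInf_le ⟨Statement12.isGrSub_sup hℳ hNg hCg, hess⟩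
          rw [← sup_inf_assoc_of_le C hNL]
          exact inf_eq_right.mpr hLsub
      have contains_simple : ∀ N : AddSubgroup M, ℳ.IsGrSub N → N ≤ L → N ≠ ⊥ →
          ∃ S, ℳ.IsGrSimpleSub S ∧ S ≤ N := by
        intro N hNg hNL hNne
        obtain ⟨x, hxN, hx0, e, f, σ, hxσ⟩ := Statement12.exists_homog hℳ hNg hNne
        have hCN : Statement12.cyc ℳ x ≤ N := Statement12.cyc_le hxN hNg.1
        have hCg : ℳ.IsGrSub (Statement12.cyc ℳ x) := Statement12.isGrSub_cyc h𝒜 hℳ hxσ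
        have hchain : ∀ c ⊆ {Q : AddSubgroup M |
            ℳ.IsGrSub Q ∧ Q ≤ Statement12.cyc ℳ x ∧ x ∉ Q},
            IsChain (· ≤ ·) c → ∀ y ∈ c,
            ∃ ub ∈ {Q : AddSubgroup M | ℳ.IsGrSub Q ∧ Q ≤ Statement12.cyc ℳ x ∧ x ∉ Q},
              ∀ z ∈ c, z ≤ ub := by
          intro c hcs hchain y hy
          refine ⟨sSup c, ⟨Statement12.isGrSub_sSup hℳ fun X hX => (hcs hX).1,
            sSup_le fun X hX => (hcs hX).2.1, ?_⟩, fun z hz => le_sSup hz⟩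
          intro hmem
          obtain ⟨X, hXc, hxX⟩ :=
            (AddSubgroup.mem_sSup_of_directedOn ⟨y, hy⟩ hchain.directedOn).mp hmem
          exact (hcs hXc).2.2 hxX
        obtain ⟨P, -, hPmax⟩ := zorn_le_nonempty₀
          {Q : AddSubgroup M | ℳ.IsGrSub Q ∧ Q ≤ Statement12.cyc ℳ x ∧ x ∉ Q} hchain ⊥
          ⟨Statement12.isGrSub_bot hℳ, bot_le, by
            rw [AddSubgroup.mem_bot]; exact hx0⟩
        have hPg := hPmax.1.1
        have hPC := hPmax.1.2.1
        have hPx := hPmax.1.2.2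
        obtain ⟨D, hDg, hPD, hPDL, hDL⟩ :=
          summand P hPg (le_trans hPC (le_trans hCN hNL))
        have hcycL : Statement12.cyc ℳ x ≤ L := le_trans hCN hNL
        have hkey : Statement12.cyc ℳ x = P ⊔ (Statement12.cyc ℳ x ⊓ D) := by
          have h1 : (P ⊔ D) ⊓ Statement12.cyc ℳ x = P ⊔ (D ⊓ Statement12.cyc ℳ x) :=
            sup_inf_assoc_of_le D hPC
          rw [hPDL] at h1
          calc Statement12.cyc ℳ x = L ⊓ Statement12.cyc ℳ x :=
                (inf_eq_right.mpr hcycL).symm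
            _ = P ⊔ (D ⊓ Statement12.cyc ℳ x) := h1
            _ = P ⊔ (Statement12.cyc ℳ x ⊓ D) := by rw [inf_comm]
        have hSne : Statement12.cyc ℳ x ⊓ D ≠ ⊥ := by
          intro hbot
          rw [hbot, sup_bot_eq] at hkey
          exact hPx (hkey ▸ Statement12.mem_cyc ℳ x)
        refine ⟨Statement12.cyc ℳ x ⊓ D,
          ⟨Statement12.isGrSub_inf hℳ hCg hDg, hSne, ?_⟩, le_trans inf_le_left hCN⟩
        intro T hTg hTS
        by_cases hxT : x ∈ P ⊔ T
        · right
          have h1 : Statement12.cyc ℳ x ≤ P ⊔ T :=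
            Statement12.cyc_le hxT (Statement12.isGrSub_sup hℳ hPg hTg).1
          have h3 : P ⊓ (Statement12.cyc ℳ x ⊓ D) = ⊥ := by
            rw [eq_bot_iff, ← hPD]
            exact le_inf inf_le_left (le_trans inf_le_right inf_le_right)
          have h2 : (T ⊔ P) ⊓ (Statement12.cyc ℳ x ⊓ D) =
              T ⊔ (P ⊓ (Statement12.cyc ℳ x ⊓ D)) := sup_inf_assoc_of_le P hTS
          rw [h3, sup_bot_eq] at h2
          have hSle : Statement12.cyc ℳ x ⊓ D ≤ T ⊔ P := by
            rw [sup_comm]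
            exact le_trans inf_le_left h1
          exact h2.symm.trans (inf_eq_right.mpr hSle)
        · left
          have hmem2 : P ⊔ T ∈
              {Q : AddSubgroup M | ℳ.IsGrSub Q ∧ Q ≤ Statement12.cyc ℳ x ∧ x ∉ Q} :=
            ⟨Statement12.isGrSub_sup hℳ hPg hTg,
              sup_le hPC (le_trans hTS inf_le_left), hxT⟩
          have hTP : T ≤ P := le_trans le_sup_right (hPmax.2 hmem2 le_sup_left)
          rw [eq_bot_iff, ← hPD]
          exact le_inf hTP (le_trans hTS inf_le_right)
      have hsocg : ℳ.IsGrSub ℳ.grSoc := by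
        rw [GModData.grSoc]
        exact Statement12.isGrSub_sSup hℳ fun N hN => hN.1
      obtain ⟨D, hDg, hintD, hsupD, hDL⟩ := summand (ℳ.grSoc ⊓ L)
        (Statement12.isGrSub_inf hℳ hsocg hLg) inf_le_right
      have hDbot : D = ⊥ := by
        by_contra hDne
        obtain ⟨S, hSsimp, hSD⟩ := contains_simple D hDg hDL hDne
        have hSbot : S ≤ ⊥ := by
          rw [← hintD]
          refine le_inf (le_inf ?_ (le_trans hSD hDL)) hSD
          rw [GModData.grSoc]
          exact le_sSup hSsimp
        exact hSsimp.2.1 (le_antisymm hSbot bot_le)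
      rw [hDbot, sup_bot_eq] at hsupD
      calc L = ℳ.grSoc ⊓ L := hsupD.symm
        _ ≤ ℳ.grSoc := inf_le_left
end

section
/- Let R be a Γ-graded ring and M a Γ-graded right R-module. Then: (1) M is finitely generated if and only if M/rad^gr(M) is finitely generated and rad^gr(M) is gr-superfluous in M; (2) M is finitely gr-cogenerated if and only if soc_gr(M) is finitely gr-cogenerated and soc_gr(M) is gr-essential in M. -/
open CategoryTheory

universe u

variable {Γ : Type u} [Groupoid.{u} Γ]

section Aux

open AddSubgroup

variable {R : Type u} {M : Type u} [AddCommGroup R] [AddCommGroup M]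
  {𝒜 : GRingData Γ R} {ℳ : GModData Γ R M}

theorem aux_smul_zero (hℳ : ℳ.IsGraded 𝒜) (m : M) : ℳ.smul m 0 = 0 := by
  have h := hℳ.smul_add m 0 0
  rw [add_zero] at h
  exact (add_eq_left.mp h.symm)

theorem aux_zero_smul (hℳ : ℳ.IsGraded 𝒜) (a : R) : ℳ.smul 0 a = 0 := by
  have h := hℳ.add_smul 0 0 a
  rw [add_zero] at h
  exact (add_eq_left.mp h.symm)

theorem aux_neg_smul (hℳ : ℳ.IsGraded 𝒜) (m : M) (a : R) :
    ℳ.smul (-m) a = -ℳ.smul m a := by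
  have h := hℳ.add_smul m (-m) a
  rw [add_neg_cancel, aux_zero_smul hℳ] at h
  exact (eq_neg_of_add_eq_zero_right h.symm)

theorem aux_smul_sum (hℳ : ℳ.IsGraded 𝒜) (m : M) {ι : Type*} (s : Finset ι)
    (f : ι → R) : ℳ.smul m (∑ i ∈ s, f i) = ∑ i ∈ s, ℳ.smul m (f i) := by
  classical
  induction s using Finset.induction with
  | empty => simpa using aux_smul_zero hℳ m
  | insert _ _ hx ih =>
      rw [Finset.sum_insert hx, Finset.sum_insert hx, hℳ.smul_add, ih]

/-- Every element in the closure of the homogeneous elements of `N` is a finite sum of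
homogeneous elements of `N`. -/
theorem aux_exists_decomp_in (N : AddSubgroup M) {n : M}
    (hn : n ∈ AddSubgroup.closure {x : M | x ∈ N ∧ ℳ.IsHomogeneous x}) :
    ∃ (t : Finset (GrIdx Γ)) (d : GrIdx Γ → M),
      (∀ γ ∈ t, d γ ∈ ℳ.component γ.2.2 ∧ d γ ∈ N) ∧ n = ∑ γ ∈ t, d γ := by
  classical
  induction hn using AddSubgroup.closure_induction with
  | mem x hx =>
      obtain ⟨hxN, e, f, γ, hxc⟩ := hx
      refine ⟨{⟨e, f, γ⟩}, fun _ => x, ?_, by simp⟩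
      rintro γ' hγ'
      rw [Finset.mem_singleton] at hγ'
      subst hγ'
      exact ⟨hxc, hxN⟩
  | zero => exact ⟨∅, fun _ => 0, by simp, by simp⟩
  | add x y hx hy ihx ihy =>
      obtain ⟨t₁, d₁, hd₁, hs₁⟩ := ihx
      obtain ⟨t₂, d₂, hd₂, hs₂⟩ := ihy
      refine ⟨t₁ ∪ t₂,
        fun γ => (if γ ∈ t₁ then d₁ γ else 0) + (if γ ∈ t₂ then d₂ γ else 0), ?_, ?_⟩
      · intro γ hγ
        constructor
        · refine add_mem ?_ ?_ <;> split_ifs with h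
          · exact (hd₁ γ h).1
          · exact zero_mem _
          · exact (hd₂ γ h).1
          · exact zero_mem _
        · refine add_mem ?_ ?_ <;> split_ifs with h
          · exact (hd₁ γ h).2
          · exact zero_mem _
          · exact (hd₂ γ h).2
          · exact zero_mem _
      · rw [Finset.sum_add_distrib, Finset.sum_ite_mem, Finset.sum_ite_mem,
          Finset.union_inter_cancel_left, Finset.union_inter_cancel_right,
          ← hs₁, ← hs₂]
  | neg x hx ihx =>
      obtain ⟨t, d, hd, hs⟩ := ihx
      refine ⟨t, fun γ => -(d γ), fun γ hγ => ⟨neg_mem (hd γ hγ).1, neg_mem (hd γ hγ).2⟩, ?_⟩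
      rw [hs, ← Finset.sum_neg_distrib]

/-- The homogeneous components of an element of a graded submodule lie in the submodule. -/
theorem aux_components_mem (hℳ : ℳ.IsGraded 𝒜) {N : AddSubgroup M} (hN : ℳ.IsGrSub N)
    {n : M} (hn : n ∈ N) {s : Finset (GrIdx Γ)} {cf : GrIdx Γ → M}
    (hcf : ∀ γ ∈ s, cf γ ∈ ℳ.component γ.2.2) (hsum : n = ∑ γ ∈ s, cf γ) :
    ∀ γ ∈ s, cf γ ∈ N := by
  classical
  obtain ⟨t, d, hd, hdsum⟩ := aux_exists_decomp_in N (hN.2 n hn)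
  have hz : ∑ γ ∈ s ∪ t,
      ((if γ ∈ s then cf γ else 0) - (if γ ∈ t then d γ else 0)) = 0 := by
    rw [Finset.sum_sub_distrib, Finset.sum_ite_mem, Finset.sum_ite_mem,
      Finset.union_inter_cancel_left, Finset.union_inter_cancel_right, ← hsum, ← hdsum,
      sub_self]
  have hmem : ∀ γ ∈ s ∪ t,
      ((if γ ∈ s then cf γ else 0) - (if γ ∈ t then d γ else 0)) ∈ ℳ.component γ.2.2 := by
    intro γ _
    refine sub_mem ?_ ?_ <;> split_ifs with h
    · exact hcf γ h
    · exact zero_mem _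
    · exact (hd γ h).1
    · exact zero_mem _
  have hind := hℳ.independent (s ∪ t) _ hmem hz
  intro γ hγ
  have h0 := hind γ (Finset.mem_union_left _ hγ)
  rw [if_pos hγ, sub_eq_zero] at h0
  by_cases ht : γ ∈ t
  · rw [if_pos ht] at h0
    rw [h0]
    exact (hd γ ht).2
  · rw [if_neg ht] at h0
    rw [h0]
    exact zero_mem _

/-- Arbitrary intersections of graded submodules are graded. -/
theorem aux_sInf_grsub (hℳ : ℳ.IsGraded 𝒜) (S : Set (AddSubgroup M))
    (hS : ∀ N ∈ S, ℳ.IsGrSub N) : ℳ.IsGrSub (sInf S) := by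
  constructor
  · intro m hm a
    rw [AddSubgroup.mem_sInf] at hm ⊢
    intro N hN
    exact (hS N hN).1 m (hm N hN) a
  · intro n hn
    obtain ⟨s, cf, hcf, hsum⟩ := hℳ.decompose n
    rw [hsum]
    refine AddSubgroup.sum_mem _ (fun γ hγ => AddSubgroup.subset_closure ⟨?_, γ.1, γ.2.1, γ.2.2, hcf γ hγ⟩)
    rw [AddSubgroup.mem_sInf]
    intro N hN
    exact aux_components_mem hℳ (hS N hN) (AddSubgroup.mem_sInf.mp hn N hN) hcf hsum γ hγ

theorem aux_sSup_le_closure (S : Set (AddSubgroup M)) :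
    sSup S ≤ AddSubgroup.closure (⋃ N ∈ S, (N : Set M)) :=
  sSup_le fun N hN x hx => AddSubgroup.subset_closure (Set.mem_biUnion hN hx)

/-- Arbitrary sups of graded submodules are graded. -/
theorem aux_sSup_grsub (hℳ : ℳ.IsGraded 𝒜) (S : Set (AddSubgroup M))
    (hS : ∀ N ∈ S, ℳ.IsGrSub N) : ℳ.IsGrSub (sSup S) := by
  constructor
  · intro m hm a
    have hm' : m ∈ AddSubgroup.closure (⋃ N ∈ S, (N : Set M)) := aux_sSup_le_closure S hm
    refine AddSubgroup.closure_induction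
      (p := fun x _ => ∀ b : R, ℳ.smul x b ∈ sSup S) ?_ ?_ ?_ ?_ hm' a
    · intro x hx b
      obtain ⟨N, hN, hxN⟩ := Set.mem_iUnion₂.mp hx
      exact le_sSup hN ((hS N hN).1 x hxN b)
    · intro b
      rw [aux_zero_smul hℳ]
      exact zero_mem _
    · intro x y hx hy ihx ihy b
      rw [hℳ.add_smul]
      exact add_mem (ihx b) (ihy b)
    · intro x hx ihx b
      rw [aux_neg_smul hℳ]
      exact neg_mem (ihx b)
  · intro n hn
    have hn' : n ∈ AddSubgroup.closure (⋃ N ∈ S, (N : Set M)) := aux_sSup_le_closure S hn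
    refine AddSubgroup.closure_induction
      (p := fun x _ => x ∈ AddSubgroup.closure {y : M | y ∈ sSup S ∧ ℳ.IsHomogeneous y})
      ?_ ?_ ?_ ?_ hn'
    · intro x hx
      obtain ⟨N, hN, hxN⟩ := Set.mem_iUnion₂.mp hx
      refine AddSubgroup.closure_mono ?_ ((hS N hN).2 x hxN)
      rintro y ⟨hyN, hy⟩
      exact ⟨le_sSup hN hyN, hy⟩
    · exact zero_mem _
    · intro x y _ _ ihx ihy
      exact add_mem ihx ihy
    · intro x _ ihx
      exact neg_mem ihx

theorem aux_top_grsub (hℳ : ℳ.IsGraded 𝒜) : ℳ.IsGrSub (⊤ : AddSubgroup M) := by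
  have := aux_sInf_grsub hℳ ∅ (by simp)
  rwa [sInf_empty] at this

theorem aux_grRad_grsub (hℳ : ℳ.IsGraded 𝒜) : ℳ.IsGrSub ℳ.grRad :=
  aux_sInf_grsub hℳ _ (fun _ hL => hL.1)

theorem aux_grSoc_grsub (hℳ : ℳ.IsGraded 𝒜) : ℳ.IsGrSub ℳ.grSoc :=
  aux_sSup_grsub hℳ _ (fun _ hL => hL.1)

theorem aux_subset_rClosure (X : Set M) : X ⊆ (ℳ.rClosure X : Set M) := by
  intro x hx
  rw [SetLike.mem_coe, GModData.rClosure, AddSubgroup.mem_sInf]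
  intro N hN
  exact hN.1 hx

theorem aux_rClosure_smul (X : Set M) :
    ∀ m ∈ ℳ.rClosure X, ∀ a : R, ℳ.smul m a ∈ ℳ.rClosure X := by
  intro m hm a
  rw [GModData.rClosure, AddSubgroup.mem_sInf] at hm ⊢
  intro N hN
  exact hN.2 m (hm N hN) a

theorem aux_rClosure_le {X : Set M} {N : AddSubgroup M} (h1 : X ⊆ N)
    (h2 : ∀ m ∈ N, ∀ a : R, ℳ.smul m a ∈ N) : ℳ.rClosure X ≤ N :=
  sInf_le ⟨h1, h2⟩

theorem aux_rClosure_mono {X Y : Set M} (h : X ⊆ Y) : ℳ.rClosure X ≤ ℳ.rClosure Y :=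
  aux_rClosure_le (h.trans (aux_subset_rClosure Y)) (aux_rClosure_smul Y)

theorem aux_closure_le_rClosure (X : Set M) :
    AddSubgroup.closure X ≤ ℳ.rClosure X :=
  (AddSubgroup.closure_le _).mpr (aux_subset_rClosure X)

/-- The submodule generated by a set of homogeneous elements is graded. -/
theorem aux_rClosure_homog_grsub (h𝒜 : 𝒜.IsObjectUnital) (hℳ : ℳ.IsGraded 𝒜)
    (X : Set M) (hX : ∀ x ∈ X, ℳ.IsHomogeneous x) : ℳ.IsGrSub (ℳ.rClosure X) := by
  refine ⟨aux_rClosure_smul X, fun n hn => ?_⟩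
  have hsmulC : ∀ m ∈ AddSubgroup.closure {x : M | x ∈ ℳ.rClosure X ∧ ℳ.IsHomogeneous x},
      ∀ a : R, ℳ.smul m a ∈
        AddSubgroup.closure {x : M | x ∈ ℳ.rClosure X ∧ ℳ.IsHomogeneous x} := by
    intro m hm a
    refine AddSubgroup.closure_induction
      (p := fun y _ => ∀ b : R, ℳ.smul y b ∈
        AddSubgroup.closure {x : M | x ∈ ℳ.rClosure X ∧ ℳ.IsHomogeneous x})
      ?_ ?_ ?_ ?_ hm a
    · rintro x ⟨hxr, e, f, σ, hxc⟩ b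
      obtain ⟨t, cfa, hcfa, hb⟩ := h𝒜.decompose b
      rw [hb, aux_smul_sum hℳ]
      refine AddSubgroup.sum_mem _ (fun τ hτ => ?_)
      by_cases hcomp : τ.2.1 = e
      · subst hcomp
        exact AddSubgroup.subset_closure
          ⟨aux_rClosure_smul X x hxr _, _, _, _, hℳ.smul_mem σ τ.2.2 hxc (hcfa τ hτ)⟩
      · rw [hℳ.smul_eq_zero σ τ.2.2 hcomp hxc (hcfa τ hτ)]
        exact zero_mem _
    · intro b
      rw [aux_zero_smul hℳ]
      exact zero_mem _
    · intro x y _ _ ihx ihy b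
      rw [hℳ.add_smul]
      exact add_mem (ihx b) (ihy b)
    · intro x _ ihx b
      rw [aux_neg_smul hℳ]
      exact neg_mem (ihx b)
  exact aux_rClosure_le
    (N := AddSubgroup.closure {x : M | x ∈ ℳ.rClosure X ∧ ℳ.IsHomogeneous x})
    (fun x hx => AddSubgroup.subset_closure ⟨aux_subset_rClosure X hx, hX x hx⟩)
    hsmulC hn

/-- `mk m`'s chosen representative differs from `m` by an element of `N`. -/
theorem aux_out_sub_mem (N : AddSubgroup M) (q : M ⧸ N) (m : M)
    (h : QuotientAddGroup.mk m = q) : Quotient.out q - m ∈ N := by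
  rw [← QuotientAddGroup.eq_iff_sub_mem]
  rw [← h]
  exact Quotient.out_eq _

theorem aux_quot_smul (N : AddSubgroup M) (q : M ⧸ N) (a : R) :
    (ℳ.quot N).smul q a = QuotientAddGroup.mk (ℳ.smul (Quotient.out q) a) := rfl

open scoped Classical in
theorem aux_restrict_smul {P : AddSubgroup M} (m : ↥P) (a : R)
    (h : ℳ.smul (↑m) a ∈ P) :
    (ℳ.restrict P).smul m a = ⟨ℳ.smul (↑m) a, h⟩ := by
  show (if h' : ℳ.smul (↑m) a ∈ P then (⟨ℳ.smul (↑m) a, h'⟩ : ↥P) else 0) = _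
  rw [dif_pos h]

/-- If `M` is f.g. then any quotient by a smul-closed subgroup is f.g. -/
theorem aux_fg_quot (hℳ : ℳ.IsGraded 𝒜) (N : AddSubgroup M)
    (hNs : ∀ m ∈ N, ∀ a : R, ℳ.smul m a ∈ N) (hfg : ℳ.FG) : (ℳ.quot N).FG := by
  classical
  obtain ⟨s, hs⟩ := hfg
  refine ⟨s.image (QuotientAddGroup.mk' N), ?_⟩
  set Q := (ℳ.quot N).rClosure ↑(s.image (QuotientAddGroup.mk' N)) with hQ
  have hsmul : ∀ m : M, QuotientAddGroup.mk m ∈ Q →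
      ∀ a : R, QuotientAddGroup.mk (ℳ.smul m a) ∈ Q := by
    intro m hm a
    have h1 : (ℳ.quot N).smul (QuotientAddGroup.mk m) a ∈ Q :=
      aux_rClosure_smul _ _ hm a
    rw [aux_quot_smul] at h1
    set o := Quotient.out (QuotientAddGroup.mk (s := N) m) with ho
    have hom : o - m ∈ N := aux_out_sub_mem N _ m rfl
    have hrw : o = m + (o - m) := by abel
    rw [hrw, hℳ.add_smul] at h1
    have h2 : QuotientAddGroup.mk (s := N) (ℳ.smul (o - m) a) = 0 := by
      rw [QuotientAddGroup.eq_zero_iff]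
      exact hNs _ hom a
    rwa [QuotientAddGroup.mk_add, h2, add_zero] at h1
  have key : ℳ.rClosure ↑s ≤ Q.comap (QuotientAddGroup.mk' N) := by
    refine aux_rClosure_le ?_ ?_
    · intro x hx
      exact aux_subset_rClosure _ (Finset.mem_coe.mpr (Finset.mem_image_of_mem _ hx))
    · intro m hm a
      exact hsmul m hm a
  rw [eq_top_iff]
  rintro q -
  obtain ⟨m, rfl⟩ := QuotientAddGroup.mk'_surjective N q
  exact key (hs.symm ▸ AddSubgroup.mem_top m)

/-- In a chain of subgroups, a finite set covered by the sup is covered by a member. -/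
theorem aux_finset_chain {c : Set (AddSubgroup M)} (hc : IsChain (· ≤ ·) c) {y : AddSubgroup M}
    (hy : y ∈ c) (t : Finset M) (ht : ∀ x ∈ t, x ∈ sSup c) :
    ∃ N ∈ c, ∀ x ∈ t, x ∈ N := by
  classical
  induction t using Finset.induction with
  | empty => exact ⟨y, hy, by simp⟩
  | insert _ _ hx ih =>
      rename_i z u
      obtain ⟨N, hN, hNall⟩ := ih (fun x hxt => ht x (Finset.mem_insert_of_mem hxt))
      have hz : z ∈ sSup c := ht z (Finset.mem_insert_self _ _)
      rw [AddSubgroup.mem_sSup_of_directedOn ⟨y, hy⟩ hc.directedOn] at hz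
      obtain ⟨N', hN', hzN'⟩ := hz
      rcases hc.total hN hN' with h | h
      · exact ⟨N', hN', fun x hxt => by
          rcases Finset.mem_insert.mp hxt with rfl | hxu
          · exact hzN'
          · exact h (hNall x hxu)⟩
      · exact ⟨N, hN, fun x hxt => by
          rcases Finset.mem_insert.mp hxt with rfl | hxu
          · exact h hzN'
          · exact hNall x hxu⟩

/-- A nonempty finite chain contains its inf. -/
theorem aux_inf_mem_of_chain {t : Finset (AddSubgroup M)} (hne : t.Nonempty)
    (hc : IsChain (· ≤ ·) (↑t : Set (AddSubgroup M))) : t.inf id ∈ t := by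
  classical
  induction t using Finset.induction with
  | empty => exact absurd hne (by simp)
  | insert _ _ hx ih =>
      rename_i z u
      have hinf : (insert z u).inf id = z ⊓ u.inf id := by
        rw [Finset.inf_insert, id_eq]
      by_cases hu : u.Nonempty
      · have hc' : IsChain (· ≤ ·) (↑u : Set (AddSubgroup M)) :=
          hc.mono (fun x hxu =>
            Finset.mem_coe.mpr (Finset.mem_insert_of_mem (Finset.mem_coe.mp hxu)))
        have hmem := ih hu hc'
        rcases hc.total (Finset.mem_coe.mpr (Finset.mem_insert_self z u))
            (Finset.mem_coe.mpr (Finset.mem_insert_of_mem hmem)) with h | h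
        · rw [hinf, inf_eq_left.mpr h]
          exact Finset.mem_insert_self _ _
        · rw [hinf, inf_eq_right.mpr h]
          exact Finset.mem_insert_of_mem hmem
      · rw [Finset.not_nonempty_iff_eq_empty] at hu
        subst hu
        rw [hinf, Finset.inf_empty, inf_top_eq]
        exact Finset.mem_insert_self _ _

/-- If `M` is f.g. then `rad^gr(M)` is gr-superfluous. -/
theorem aux_fg_superfluous (hℳ : ℳ.IsGraded 𝒜) (hfg : ℳ.FG) :
    ℳ.GrSuperfluous ℳ.grRad := by
  intro X hX hsup
  by_contra hXne
  obtain ⟨s, hs⟩ := hfg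
  set T : Set (AddSubgroup M) := {N | ℳ.IsGrSub N ∧ N ≠ ⊤ ∧ X ≤ N} with hT
  have hzorn := zorn_le_nonempty₀ T ?_ X ⟨hX, hXne, le_rfl⟩
  · obtain ⟨m0, hXm0, hm0⟩ := hzorn
    have hm0max : ℳ.IsGrMaximalSub m0 := by
      refine ⟨hm0.1.1, hm0.1.2.1, fun L hL hle => ?_⟩
      by_cases hLtop : L = ⊤
      · exact Or.inr hLtop
      · exact Or.inl (le_antisymm (hm0.2 ⟨hL, hLtop, le_trans hm0.1.2.2 hle⟩ hle) hle)
    have hrad : ℳ.grRad ≤ m0 := sInf_le hm0max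
    have : (⊤ : AddSubgroup M) ≤ m0 := by
      rw [← hsup]
      exact sup_le hrad hm0.1.2.2
    exact hm0.1.2.1 (top_unique this)
  · intro c hcT hchain y hyc
    refine ⟨sSup c, ⟨aux_sSup_grsub hℳ c (fun N hN => (hcT hN).1), ?_, ?_⟩,
      fun z hz => le_sSup hz⟩
    · intro htop
      have hall : ∀ x ∈ s, x ∈ sSup c := fun x _ => htop ▸ AddSubgroup.mem_top x
      obtain ⟨N, hNc, hNall⟩ := aux_finset_chain hchain hyc s hall
      have : ℳ.rClosure ↑s ≤ N := aux_rClosure_le hNall (hcT hNc).1.1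
      exact (hcT hNc).2.1 (top_unique (hs ▸ this))
    · exact le_trans (hcT hyc).2.2 (le_sSup hyc)

/-- If `M/rad` is f.g. and the radical is superfluous then `M` is f.g. -/
theorem aux_quot_fg_fg (h𝒜 : 𝒜.IsObjectUnital) (hℳ : ℳ.IsGraded 𝒜)
    (hq : (ℳ.quot ℳ.grRad).FG) (hsup : ℳ.GrSuperfluous ℳ.grRad) : ℳ.FG := by
  classical
  set N := ℳ.grRad with hNdef
  obtain ⟨t, ht⟩ := hq
  have H : ∀ x : M, ∃ u : Finset M, (∀ y ∈ u, ℳ.IsHomogeneous y) ∧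
      x ∈ AddSubgroup.closure (↑u : Set M) := by
    intro x
    obtain ⟨s, cf, hcf, hsum⟩ := hℳ.decompose x
    refine ⟨s.image cf, ?_, ?_⟩
    · intro y hy
      obtain ⟨γ, hγ, rfl⟩ := Finset.mem_image.mp hy
      exact ⟨_, _, _, hcf γ hγ⟩
    · rw [hsum]
      exact AddSubgroup.sum_mem _ fun γ hγ =>
        AddSubgroup.subset_closure (Finset.mem_coe.mpr (Finset.mem_image_of_mem cf hγ))
  choose u hu1 hu2 using H
  set s' : Finset M := t.biUnion (fun q => u (Quotient.out q)) with hs'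
  set X := ℳ.rClosure ↑s' with hXdef
  have hXgr : ℳ.IsGrSub X := by
    refine aux_rClosure_homog_grsub h𝒜 hℳ _ (fun x hx => ?_)
    obtain ⟨q, hqt, hxu⟩ := Finset.mem_biUnion.mp hx
    exact hu1 _ x hxu
  have hNgr : ℳ.IsGrSub N := aux_grRad_grsub hℳ
  have hWs : ∀ m ∈ X ⊔ N, ∀ a : R, ℳ.smul m a ∈ X ⊔ N := by
    intro m hm a
    rw [AddSubgroup.mem_sup] at hm ⊢
    obtain ⟨x, hx, n, hn, rfl⟩ := hm
    exact ⟨ℳ.smul x a, aux_rClosure_smul _ x hx a, ℳ.smul n a, hNgr.1 n hn a,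
      (hℳ.add_smul x n a).symm⟩
  have hmap : (ℳ.quot N).rClosure ↑t ≤ (X ⊔ N).map (QuotientAddGroup.mk' N) := by
    refine aux_rClosure_le ?_ ?_
    · intro q hqt
      refine AddSubgroup.mem_map.mpr ⟨Quotient.out q, ?_, Quotient.out_eq q⟩
      refine AddSubgroup.mem_sup_left ?_
      have h1 : Quotient.out q ∈ AddSubgroup.closure (↑(u (Quotient.out q)) : Set M) :=
        hu2 (Quotient.out q)
      have h2 : AddSubgroup.closure (↑(u (Quotient.out q)) : Set M) ≤ X := by
        refine le_trans (aux_closure_le_rClosure _) (aux_rClosure_mono ?_)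
        intro z hz
        exact Finset.mem_coe.mpr (Finset.mem_biUnion.mpr ⟨q, hqt, Finset.mem_coe.mp hz⟩)
      exact h2 h1
    · intro q hq a
      obtain ⟨w, hw, rfl⟩ := AddSubgroup.mem_map.mp hq
      rw [aux_quot_smul]
      set o := Quotient.out ((QuotientAddGroup.mk' N) w) with ho
      have hom : o - w ∈ N := aux_out_sub_mem N _ w rfl
      have hoW : o ∈ X ⊔ N := by
        have : o = w + (o - w) := by abel
        rw [this]
        exact add_mem hw (AddSubgroup.mem_sup_right hom)
      exact AddSubgroup.mem_map.mpr ⟨ℳ.smul o a, hWs o hoW a, rfl⟩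
  have hmaptop : (X ⊔ N).map (QuotientAddGroup.mk' N) = ⊤ := by
    rw [eq_top_iff, ← ht]
    exact hmap
  have hWtop : X ⊔ N = ⊤ := by
    have h2 := congrArg (AddSubgroup.comap (QuotientAddGroup.mk' N)) hmaptop
    rw [AddSubgroup.comap_map_eq, QuotientAddGroup.ker_mk'] at h2
    rw [sup_assoc, sup_idem] at h2
    rw [h2]
    exact AddSubgroup.comap_top _
  have hXtop : X = ⊤ := hsup X hXgr (by rwa [sup_comm] at hWtop)
  exact ⟨s', hXtop⟩

/-- If `M` is finitely gr-cogenerated then the gr-socle is gr-essential. -/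
theorem aux_fincog_essential (hℳ : ℳ.IsGraded 𝒜) (hcog : ℳ.FinGrCogenerated) :
    ℳ.GrEssential ℳ.grSoc := by
  intro X hX hinter
  by_contra hXne
  set T : Set (AddSubgroup M)ᵒᵈ :=
    {Y | ℳ.IsGrSub (OrderDual.ofDual Y) ∧ OrderDual.ofDual Y ≠ ⊥ ∧
      OrderDual.ofDual Y ≤ X} with hT
  have hzorn := zorn_le_nonempty₀ T ?_ (OrderDual.toDual X) ⟨hX, hXne, le_rfl⟩
  · obtain ⟨m0d, hXm0, hm0⟩ := hzorn
    set m0 : AddSubgroup M := OrderDual.ofDual m0d with hm0def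
    have hsimple : ℳ.IsGrSimpleSub m0 := by
      refine ⟨hm0.1.1, hm0.1.2.1, fun L hL hle => ?_⟩
      by_cases hLbot : L = ⊥
      · exact Or.inl hLbot
      · refine Or.inr (le_antisymm hle ?_)
        exact hm0.2 (y := OrderDual.toDual L) ⟨hL, hLbot, le_trans hle hm0.1.2.2⟩ hle
    have hle : m0 ≤ ℳ.grSoc := le_sSup hsimple
    have : m0 ≤ ℳ.grSoc ⊓ X := le_inf hle hm0.1.2.2
    rw [hinter, le_bot_iff] at this
    exact hm0.1.2.1 this
  · intro c hcT hchain y hyc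
    set c₀ : Set (AddSubgroup M) := {N | OrderDual.toDual N ∈ c} with hc₀
    have hc₀gr : ∀ N ∈ c₀, ℳ.IsGrSub N := fun N hN => (hcT hN).1
    have hbotne : sInf c₀ ≠ ⊥ := by
      intro hbot
      obtain ⟨t, htc, htinf⟩ := hcog c₀ hc₀gr hbot
      by_cases hte : t.Nonempty
      · have htchain : IsChain (· ≤ ·) (↑t : Set (AddSubgroup M)) := by
          intro a ha b hb hab
          have h := hchain (htc ha) (htc hb)
            (fun h' => hab (congrArg OrderDual.ofDual h'))
          exact h.symm.imp (fun h'' => h'') (fun h'' => h'')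
        exact (hcT (htc (aux_inf_mem_of_chain hte htchain))).2.1 htinf
      · rw [Finset.not_nonempty_iff_eq_empty] at hte
        subst hte
        rw [Finset.inf_empty] at htinf
        exact hXne (le_bot_iff.mp (htinf ▸ le_top))
    refine ⟨OrderDual.toDual (sInf c₀), ⟨aux_sInf_grsub hℳ c₀ hc₀gr, hbotne, ?_⟩,
      fun z hz => ?_⟩
    · exact le_trans (sInf_le (show OrderDual.ofDual y ∈ c₀ from hyc)) (hcT hyc).2.2
    · exact sInf_le (show OrderDual.ofDual z ∈ c₀ from hz)

/-- Graded submodules of `M` restrict to graded submodules of a graded submodule `P`. -/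
theorem aux_addSubgroupOf_grsub (hℳ : ℳ.IsGraded 𝒜) {P : AddSubgroup M}
    (hP : ℳ.IsGrSub P) {N : AddSubgroup M} (hN : ℳ.IsGrSub N) :
    (ℳ.restrict P).IsGrSub (N.addSubgroupOf P) := by
  classical
  constructor
  · intro m hm a
    have hmem : ℳ.smul (↑m) a ∈ P := hP.1 (↑m) m.2 a
    rw [AddSubgroup.mem_addSubgroupOf] at hm ⊢
    rw [aux_restrict_smul m a hmem]
    exact hN.1 _ hm a
  · intro n hn
    rw [AddSubgroup.mem_addSubgroupOf] at hn
    obtain ⟨s, cf, hcf, hsum⟩ := hℳ.decompose (↑n : M)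
    have hcfP : ∀ γ ∈ s, cf γ ∈ P := aux_components_mem hℳ hP n.2 hcf hsum
    have hcfN : ∀ γ ∈ s, cf γ ∈ N := aux_components_mem hℳ hN hn hcf hsum
    set cf' : GrIdx Γ → ↥P := fun γ => if h : γ ∈ s then ⟨cf γ, hcfP γ h⟩ else 0 with hcf'
    have hsum' : n = ∑ γ ∈ s, cf' γ := by
      apply Subtype.ext
      push_cast
      rw [hsum]
      refine Finset.sum_congr rfl (fun γ hγ => ?_)
      simp [hcf', dif_pos hγ]
    rw [hsum']
    refine AddSubgroup.sum_mem _ (fun γ hγ => AddSubgroup.subset_closure ?_)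
    constructor
    · rw [AddSubgroup.mem_addSubgroupOf]
      simp only [hcf', dif_pos hγ]
      exact hcfN γ hγ
    · refine ⟨γ.1, γ.2.1, γ.2.2, ?_⟩
      show cf' γ ∈ (ℳ.component γ.2.2).addSubgroupOf P
      rw [AddSubgroup.mem_addSubgroupOf]
      simp only [hcf', dif_pos hγ]
      exact hcf γ hγ

/-- If `M` is finitely gr-cogenerated then so is its gr-socle. -/
theorem aux_fincog_soc (hℳ : ℳ.IsGraded 𝒜) (hcog : ℳ.FinGrCogenerated) :
    (ℳ.restrict ℳ.grSoc).FinGrCogenerated := by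
  classical
  set soc := ℳ.grSoc with hsoc
  intro S' hS' hsinf
  rcases Set.eq_empty_or_nonempty S' with hS'e | ⟨N'₀, hN'₀⟩
  · subst hS'e
    rw [sInf_empty] at hsinf
    exact ⟨∅, by simp, by rw [Finset.inf_empty]; exact hsinf⟩
  have hsocgr : ℳ.IsGrSub soc := aux_grSoc_grsub hℳ
  set F : AddSubgroup ↥soc → AddSubgroup M := fun N' => N'.map soc.subtype with hF
  have hFle : ∀ N', F N' ≤ soc := by
    rintro N' x hx
    obtain ⟨y, _, rfl⟩ := AddSubgroup.mem_map.mp hx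
    exact y.2
  have hFmem : ∀ (N' : AddSubgroup ↥soc) (y : ↥soc), (↑y : M) ∈ F N' ↔ y ∈ N' := by
    intro N' y
    constructor
    · intro h
      obtain ⟨z, hz, hzy⟩ := AddSubgroup.mem_map.mp h
      have : z = y := Subtype.ext hzy
      rwa [← this]
    · intro h
      exact AddSubgroup.mem_map.mpr ⟨y, h, rfl⟩
  have hmapgr : ∀ N' ∈ S', ℳ.IsGrSub (F N') := by
    intro N' hN'
    obtain ⟨hN'1, hN'2⟩ := hS' N' hN'
    constructor
    · intro m hm a
      obtain ⟨y, hy, rfl⟩ := AddSubgroup.mem_map.mp hm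
      have hmem : ℳ.smul (↑y) a ∈ soc := hsocgr.1 (↑y) y.2 a
      have := hN'1 y hy a
      rw [aux_restrict_smul y a hmem] at this
      exact AddSubgroup.mem_map.mpr ⟨_, this, rfl⟩
    · intro n hn
      obtain ⟨y, hy, rfl⟩ := AddSubgroup.mem_map.mp hn
      have h1 := hN'2 y hy
      have h2 : (↑y : M) ∈ (AddSubgroup.closure
          {x : ↥soc | x ∈ N' ∧ (ℳ.restrict soc).IsHomogeneous x}).map soc.subtype :=
        AddSubgroup.mem_map.mpr ⟨y, h1, rfl⟩
      rw [AddMonoidHom.map_closure] at h2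
      refine AddSubgroup.closure_mono ?_ h2
      rintro x ⟨w, ⟨hwN, e, f, γ, hwc⟩, rfl⟩
      exact ⟨AddSubgroup.mem_map.mpr ⟨w, hwN, rfl⟩, e, f, γ,
        AddSubgroup.mem_addSubgroupOf.mp hwc⟩
  have hsinfM : sInf (F '' S') = ⊥ := by
    rw [eq_bot_iff]
    intro x hx
    have hxsoc : x ∈ soc := hFle N'₀ (AddSubgroup.mem_sInf.mp hx _ ⟨N'₀, hN'₀, rfl⟩)
    have hxy : ∀ N' ∈ S', (⟨x, hxsoc⟩ : ↥soc) ∈ N' := by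
      intro N' hN'
      have := AddSubgroup.mem_sInf.mp hx (F N') ⟨N', hN', rfl⟩
      exact (hFmem N' ⟨x, hxsoc⟩).mp this
    have hmem : (⟨x, hxsoc⟩ : ↥soc) ∈ sInf S' := AddSubgroup.mem_sInf.mpr hxy
    rw [hsinf] at hmem
    have : (⟨x, hxsoc⟩ : ↥soc) = 0 := hmem
    simpa using congrArg Subtype.val this
  obtain ⟨t, htsub, htinf⟩ := hcog (F '' S') (by rintro N ⟨N', hN', rfl⟩; exact hmapgr N' hN')
    hsinfM
  set g : AddSubgroup M → AddSubgroup ↥soc := fun N =>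
    if h : ∃ N' ∈ S', F N' = N then h.choose else ⊥ with hg
  have hgspec : ∀ N ∈ t, g N ∈ S' ∧ F (g N) = N := by
    intro N hN
    obtain ⟨N', hN', hFN'⟩ := htsub hN
    have hex : ∃ N' ∈ S', F N' = N := ⟨N', hN', hFN'⟩
    rw [hg]
    simp only [dif_pos hex]
    exact ⟨hex.choose_spec.1, hex.choose_spec.2⟩
  refine ⟨t.image g, ?_, ?_⟩
  · intro N' hN'
    obtain ⟨N, hN, rfl⟩ := Finset.mem_image.mp hN'
    exact (hgspec N hN).1
  · rw [eq_bot_iff]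
    intro x hx
    have hxall : ∀ N ∈ t, (↑x : M) ∈ N := by
      intro N hN
      have h1 : x ∈ g N := by
        have := Finset.inf_le (Finset.mem_image_of_mem g hN) (f := id)
        exact this hx
      rw [← (hgspec N hN).2]
      exact (hFmem (g N) x).mpr h1
    have : (↑x : M) ∈ t.inf id := by
      rw [Finset.inf_id_eq_sInf, AddSubgroup.mem_sInf]
      exact fun N hN => hxall N hN
    rw [htinf] at this
    have hx0 : (↑x : M) = 0 := this
    exact AddSubgroup.mem_bot.mpr (Subtype.ext hx0)

/-- Converse of part (2). -/
theorem aux_cog_converse (hℳ : ℳ.IsGraded 𝒜)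
    (hsoccog : (ℳ.restrict ℳ.grSoc).FinGrCogenerated)
    (hess : ℳ.GrEssential ℳ.grSoc) : ℳ.FinGrCogenerated := by
  classical
  set soc := ℳ.grSoc with hsoc
  intro S hS hsinf
  have hsocgr : ℳ.IsGrSub soc := aux_grSoc_grsub hℳ
  set G : AddSubgroup M → AddSubgroup ↥soc := fun N => N.addSubgroupOf soc with hG
  have hGgr : ∀ N' ∈ G '' S, (ℳ.restrict soc).IsGrSub N' := by
    rintro N' ⟨N, hN, rfl⟩
    exact aux_addSubgroupOf_grsub hℳ hsocgr (hS N hN)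
  have hGinf : sInf (G '' S) = ⊥ := by
    rw [eq_bot_iff]
    intro x hx
    have hxS : (↑x : M) ∈ sInf S := by
      rw [AddSubgroup.mem_sInf]
      intro N hN
      have := AddSubgroup.mem_sInf.mp hx (G N) ⟨N, hN, rfl⟩
      exact AddSubgroup.mem_addSubgroupOf.mp this
    rw [hsinf] at hxS
    exact AddSubgroup.mem_bot.mpr (Subtype.ext hxS)
  obtain ⟨t', ht'sub, ht'inf⟩ := hsoccog (G '' S) hGgr hGinf
  set g : AddSubgroup ↥soc → AddSubgroup M := fun N' =>
    if h : ∃ N ∈ S, G N = N' then h.choose else ⊥ with hg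
  have hgspec : ∀ N' ∈ t', g N' ∈ S ∧ G (g N') = N' := by
    intro N' hN'
    obtain ⟨N, hN, hGN⟩ := ht'sub hN'
    have hex : ∃ N ∈ S, G N = N' := ⟨N, hN, hGN⟩
    rw [hg]
    simp only [dif_pos hex]
    exact ⟨hex.choose_spec.1, hex.choose_spec.2⟩
  set t : Finset (AddSubgroup M) := t'.image g with htdef
  have htS : ↑t ⊆ S := by
    intro N hN
    obtain ⟨N', hN', rfl⟩ := Finset.mem_image.mp hN
    exact (hgspec N' hN').1
  set K : AddSubgroup M := t.inf id with hK
  have hKgr : ℳ.IsGrSub K := by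
    rw [hK, Finset.inf_id_eq_sInf]
    exact aux_sInf_grsub hℳ _ (fun N hN => hS N (htS hN))
  have hKsoc : soc ⊓ K = ⊥ := by
    rw [eq_bot_iff]
    intro x hx
    have hxsoc : x ∈ soc := hx.1
    have hxel : (⟨x, hxsoc⟩ : ↥soc) ∈ t'.inf id := by
      rw [Finset.inf_id_eq_sInf, AddSubgroup.mem_sInf]
      intro N' hN'
      rw [← (hgspec N' hN').2, hG]
      rw [AddSubgroup.mem_addSubgroupOf]
      have hle : K ≤ g N' := Finset.inf_le (Finset.mem_image_of_mem g hN') (f := id)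
      exact hle hx.2
    rw [ht'inf] at hxel
    have : (⟨x, hxsoc⟩ : ↥soc) = 0 := hxel
    simpa using congrArg Subtype.val this
  have hKbot : K = ⊥ := hess K hKgr hKsoc
  exact ⟨t, htS, hKbot⟩

end Aux

/-- Let `R` be a `Γ`-graded ring and `M` a `Γ`-graded right
`R`-module. Then (1) `M` is finitely generated iff `M/rad^gr(M)` is finitely
generated and `rad^gr(M)` is gr-superfluous in `M`; (2) `M` is finitely
gr-cogenerated iff `soc_gr(M)` is finitely gr-cogenerated and `soc_gr(M)` is
gr-essential in `M`. -/
theorem fg_iff_quot_rad_fg_and_finGrCog_iff_soc_finGrCog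
    {Γ : Type u} [Groupoid.{u} Γ] {R : Type u} [AddCommGroup R] {M : Type u}
    [AddCommGroup M] (𝒜 : GRingData Γ R) (h𝒜 : 𝒜.IsObjectUnital)
    (ℳ : GModData Γ R M) (hℳ : ℳ.IsGraded 𝒜) :
    (ℳ.FG ↔ (ℳ.quot ℳ.grRad).FG ∧ ℳ.GrSuperfluous ℳ.grRad) ∧
    (ℳ.FinGrCogenerated ↔
      (ℳ.restrict ℳ.grSoc).FinGrCogenerated ∧ ℳ.GrEssential ℳ.grSoc) := by
  constructor
  · constructor
    · intro hfg
      exact ⟨aux_fg_quot hℳ ℳ.grRad (aux_grRad_grsub hℳ).1 hfg,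
        aux_fg_superfluous hℳ hfg⟩
    · rintro ⟨hq, hsup⟩
      exact aux_quot_fg_fg h𝒜 hℳ hq hsup
  · constructor
    · intro hcog
      exact ⟨aux_fincog_soc hℳ hcog, aux_fincog_essential hℳ hcog⟩
    · rintro ⟨hsoccog, hess⟩
      exact aux_cog_converse hℳ hsoccog hess
end
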